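/- arXiv:1304.1445 — 4 statements merged into one kernel-verified Lean document; each statement's English description precedes it below -/
import Mathlib

section
/- If an iterated function system generated by homeomorphisms f_1,...,f_k of a compact metric space X contains a minimal homeomorphism h (i.e., h is some composition of the generators and every h-orbit is dense in X), then for any probability P on the sequence space {1,...,k}^N in which each symbol has conditional probability at least p > 0 at every step, there exists a set Ω of sequences with P(Ω)=1 such that for every ω ∈ Ω and every x ∈ X, the fiberwise orbit {f_{ω_n} ∘ ... ∘ f_{ω_1}(x) : n ∈ N} is dense in X. -/
open MeasureTheory Set ENNReal

def seqComp {X : Type*} {k : ℕ} (f : Fin k → X → X) (ω : ℕ → Fin k) : ℕ → X → X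
  | 0 => id
  | n + 1 => fun x => f (ω n) (seqComp f ω n x)

def listComp {X : Type*} {k : ℕ} (f : Fin k → X → X) (l : List (Fin k)) : X → X :=
  fun x => l.foldl (fun y i => f i y) x

section aux
variable {X : Type*} {k : ℕ}

lemma listComp_concat (f : Fin k → X → X) (l : List (Fin k)) (a : Fin k) (x : X) :
    listComp f (l.concat a) x = f a (listComp f l x) := by
  simp [listComp, List.foldl_concat]

lemma seqComp_eq_listComp (f : Fin k → X → X) (σ : ℕ → Fin k) (n : ℕ) (x : X) :
    seqComp f σ n x = listComp f (List.ofFn fun i : Fin n => σ i) x := by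
  induction n with
  | zero => rfl
  | succ n ih =>
      rw [List.ofFn_succ', listComp_concat]
      show f (σ n) (seqComp f σ n x) = _
      rw [ih]
      rfl

lemma seqComp_add (f : Fin k → X → X) (ω : ℕ → Fin k) (q t : ℕ) (x : X) :
    seqComp f ω (q + t) x = seqComp f (fun i => ω (q + i)) t (seqComp f ω q x) := by
  induction t with
  | zero => rfl
  | succ t ih =>
      show f (ω (q + t)) (seqComp f ω (q + t) x) = f (ω (q + t)) _
      rw [ih]

lemma continuous_listComp [TopologicalSpace X] (f : Fin k → X → X) (hf : ∀ i, Continuous (f i))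
    (l : List (Fin k)) : Continuous (listComp f l) := by
  induction l with
  | nil => exact continuous_id
  | cons a t ih =>
      have : listComp f (a :: t) = (listComp f t) ∘ (f a) := rfl
      rw [this]
      exact ih.comp (hf a)

lemma unif_minimal [MetricSpace X] [CompactSpace X] (h : X → X) (hc : Continuous h)
    (hd : ∀ x : X, Dense (Set.range fun n : ℕ => h^[n] x)) {ε : ℝ} (hε : 0 < ε) :
    ∃ N : ℕ, ∀ y z : X, ∃ j ≤ N, dist (h^[j] y) z < ε := by
  set V : ℕ → Set (X × X) := fun n => ⋃ j ∈ Finset.range (n + 1), {q | dist (h^[j] q.1) q.2 < ε}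
  have hVo : ∀ n, IsOpen (V n) := by
    intro n
    refine isOpen_biUnion fun j _ => ?_
    exact isOpen_lt (Continuous.dist ((hc.iterate j).comp continuous_fst) continuous_snd)
      continuous_const
  have hcover : (Set.univ : Set (X × X)) ⊆ ⋃ n, V n := by
    intro q _
    have : DenseRange (fun n : ℕ => h^[n] q.1) := hd q.1
    obtain ⟨n, hn⟩ := this.exists_dist_lt q.2 hε
    refine mem_iUnion.2 ⟨n, mem_iUnion₂.2 ⟨n, Finset.mem_range.2 (Nat.lt_succ_self n), ?_⟩⟩
    simpa [dist_comm] using hn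
  obtain ⟨t, ht⟩ := isCompact_univ.elim_finite_subcover V hVo hcover
  refine ⟨t.sup id, fun y z => ?_⟩
  have : (y, z) ∈ ⋃ n ∈ t, V n := ht (mem_univ _)
  obtain ⟨n, hnt, hmem⟩ := mem_iUnion₂.1 this
  obtain ⟨j, hj, hdist⟩ := mem_iUnion₂.1 hmem
  exact ⟨j, le_trans (Nat.lt_succ_iff.1 (Finset.mem_range.1 hj)) (Finset.le_sup (f := id) hnt),
    hdist⟩


lemma measurableSet_cyl {n : ℕ} (υ : Fin n → Fin k) :
    MeasurableSet {ω : ℕ → Fin k | ∀ j : Fin n, ω (j : ℕ) = υ j} := by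
  have : {ω : ℕ → Fin k | ∀ j : Fin n, ω (j : ℕ) = υ j}
      = ⋂ j : Fin n, (fun ω : ℕ → Fin k => ω (j : ℕ)) ⁻¹' {υ j} := by
    ext ω; simp [Set.mem_iInter]
  rw [this]
  exact MeasurableSet.iInter fun j =>
    (measurable_pi_apply (j : ℕ)) (measurableSet_singleton (υ j))

lemma match_set_measurable (g : ℕ → Fin k) (n t : ℕ) :
    MeasurableSet {ω : ℕ → Fin k | ∀ i < t, ω (n + i) = g i} := by
  have : {ω : ℕ → Fin k | ∀ i < t, ω (n + i) = g i}
      = ⋂ i, ⋂ (_ : i < t), (fun ω : ℕ → Fin k => ω (n + i)) ⁻¹' {g i} := by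
    ext ω; simp
  rw [this]
  exact MeasurableSet.iInter fun i => MeasurableSet.iInter fun _ =>
    (measurable_pi_apply _) (measurableSet_singleton _)

lemma fail_measurable (g : ℕ → Fin k) (T m : ℕ) :
    MeasurableSet {ω : ℕ → Fin k | ∀ j < m, ∃ i < T, ω (j * T + i) ≠ g i} := by
  have : {ω : ℕ → Fin k | ∀ j < m, ∃ i < T, ω (j * T + i) ≠ g i}
      = ⋂ j, ⋂ (_ : j < m), ⋃ i, ⋃ (_ : i < T),
          ((fun ω : ℕ → Fin k => ω (j * T + i)) ⁻¹' {g i})ᶜ := by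
    ext ω; simp
  rw [this]
  exact MeasurableSet.iInter fun j => MeasurableSet.iInter fun _ =>
    MeasurableSet.iUnion fun i => MeasurableSet.iUnion fun _ =>
      ((measurable_pi_apply _) (measurableSet_singleton _)).compl

lemma ext_lemma (P : Measure (ℕ → Fin k)) (p : ℝ≥0∞)
    (hP : ∀ (n : ℕ) (υ : Fin n → Fin k) (i : Fin k),
      p * P {ω | ∀ j : Fin n, ω (j : ℕ) = υ j} ≤
        P {ω | (∀ j : Fin n, ω (j : ℕ) = υ j) ∧ ω n = i})
    (g : ℕ → Fin k) :
    ∀ (t n : ℕ) (υ : Fin n → Fin k),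
      p ^ t * P {ω | ∀ j : Fin n, ω (j : ℕ) = υ j} ≤
        P ({ω | ∀ j : Fin n, ω (j : ℕ) = υ j} ∩ {ω | ∀ i < t, ω (n + i) = g i}) := by
  intro t
  induction t with
  | zero =>
      intro n υ
      have : {ω : ℕ → Fin k | ∀ i < 0, ω (n + i) = g i} = Set.univ := by
        ext ω; simp
      simp [this]
  | succ t ih =>
      intro n υ
      set υ' : Fin (n + t) → Fin k :=
        fun j => if h : (j : ℕ) < n then υ ⟨j, h⟩ else g ((j : ℕ) - n) with hυ'
      have hcyl : {ω : ℕ → Fin k | ∀ j : Fin (n + t), ω (j : ℕ) = υ' j}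
          = {ω | ∀ j : Fin n, ω (j : ℕ) = υ j} ∩ {ω | ∀ i < t, ω (n + i) = g i} := by
        ext ω
        simp only [Set.mem_setOf_eq, Set.mem_inter_iff]
        constructor
        · intro hω
          constructor
          · intro j
            have := hω ⟨(j : ℕ), lt_of_lt_of_le j.2 (Nat.le_add_right n t)⟩
            simpa [hυ', j.2] using this
          · intro i hi
            have := hω ⟨n + i, by omega⟩
            simpa [hυ', Nat.not_lt.2 (Nat.le_add_right n i)] using this
        · rintro ⟨h1, h2⟩ j
          by_cases hj : (j : ℕ) < n
          · simpa [hυ', hj] using h1 ⟨(j : ℕ), hj⟩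
          · have hj' : (j : ℕ) = n + ((j : ℕ) - n) := by omega
            have := h2 ((j : ℕ) - n) (by omega)
            rw [hυ']
            simp only [hj, dif_neg, not_false_iff]
            rw [hj']
            simpa using this
      have hstep := hP (n + t) υ' (g t)
      have hfinal : {ω : ℕ → Fin k | (∀ j : Fin (n + t), ω (j : ℕ) = υ' j) ∧ ω (n + t) = g t}
          = {ω | ∀ j : Fin n, ω (j : ℕ) = υ j} ∩ {ω | ∀ i < t + 1, ω (n + i) = g i} := by
        ext ω
        have hc := Set.ext_iff.1 hcyl ω
        simp only [Set.mem_setOf_eq, Set.mem_inter_iff] at hc ⊢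
        constructor
        · rintro ⟨h1, h2⟩
          obtain ⟨ha, hb⟩ := hc.1 h1
          refine ⟨ha, fun i hi => ?_⟩
          rcases Nat.lt_succ_iff_lt_or_eq.1 hi with h | h
          · exact hb i h
          · subst h; exact h2
        · rintro ⟨h1, h2⟩
          exact ⟨hc.2 ⟨h1, fun i hi => h2 i (Nat.lt_succ_of_lt hi)⟩, h2 t (Nat.lt_succ_self t)⟩
      calc p ^ (t + 1) * P {ω | ∀ j : Fin n, ω (j : ℕ) = υ j}
          = p * (p ^ t * P {ω | ∀ j : Fin n, ω (j : ℕ) = υ j}) := by ring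
        _ ≤ p * P ({ω | ∀ j : Fin n, ω (j : ℕ) = υ j} ∩ {ω | ∀ i < t, ω (n + i) = g i}) :=
            mul_le_mul_right (ih n υ) p
        _ = p * P {ω : ℕ → Fin k | ∀ j : Fin (n + t), ω (j : ℕ) = υ' j} := by rw [hcyl]
        _ ≤ P {ω : ℕ → Fin k | (∀ j : Fin (n + t), ω (j : ℕ) = υ' j) ∧ ω (n + t) = g t} := hstep
        _ = _ := by rw [hfinal]


lemma fail_decay (P : Measure (ℕ → Fin k)) [IsProbabilityMeasure P] (p : ℝ≥0∞)
    (hP : ∀ (n : ℕ) (υ : Fin n → Fin k) (i : Fin k),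
      p * P {ω | ∀ j : Fin n, ω (j : ℕ) = υ j} ≤
        P {ω | (∀ j : Fin n, ω (j : ℕ) = υ j) ∧ ω n = i})
    (g : ℕ → Fin k) (T : ℕ) :
    ∀ m : ℕ, P {ω | ∀ j < m, ∃ i < T, ω (j * T + i) ≠ g i} ≤ (1 - p ^ T) ^ m := by
  intro m
  induction m with
  | zero =>
      have : {ω : ℕ → Fin k | ∀ j < 0, ∃ i < T, ω (j * T + i) ≠ g i} = Set.univ := by
        ext ω; simp
      simp [this]
  | succ m ih =>
      set Fail := {ω : ℕ → Fin k | ∀ j < m, ∃ i < T, ω (j * T + i) ≠ g i} with hFail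
      set Good := {ω : ℕ → Fin k | ∀ i < T, ω (m * T + i) = g i} with hGood
      -- Fail (m+1) = Fail \ Good
      have hsplit : {ω : ℕ → Fin k | ∀ j < m + 1, ∃ i < T, ω (j * T + i) ≠ g i}
          = Fail \ Good := by
        ext ω
        simp only [hFail, hGood, Set.mem_setOf_eq, Set.mem_diff]
        constructor
        · intro hω
          refine ⟨fun j hj => hω j (Nat.lt_succ_of_lt hj), ?_⟩
          intro hg
          obtain ⟨i, hi, hne⟩ := hω m (Nat.lt_succ_self m)
          exact hne (hg i hi)
        · rintro ⟨h1, h2⟩ j hj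
          rcases Nat.lt_succ_iff_lt_or_eq.1 hj with h | h
          · exact h1 j h
          · subst h
            by_contra hcon
            push_neg at hcon
            exact h2 fun i hi => hcon i hi
      -- lower bound for the good extension, υ-wise
      have hCsubFail : ∀ υ : Fin (m * T) → Fin k,
          (Fail ∩ {ω | ∀ j : Fin (m * T), ω (j : ℕ) = υ j}).Nonempty →
          {ω : ℕ → Fin k | ∀ j : Fin (m * T), ω (j : ℕ) = υ j} ⊆ Fail := by
        rintro υ ⟨ω0, hω0F, hω0C⟩ ω hω j hj
        obtain ⟨i, hi, hne⟩ := hω0F j hj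
        refine ⟨i, hi, ?_⟩
        have hlt : j * T + i < m * T := by
          calc j * T + i < j * T + T := by omega
            _ = (j + 1) * T := by ring
            _ ≤ m * T := Nat.mul_le_mul_right T hj
        have e1 := hω ⟨j * T + i, hlt⟩
        have e2 := hω0C ⟨j * T + i, hlt⟩
        rw [e1, ← e2]
        exact hne
      have hkey : ∀ υ : Fin (m * T) → Fin k,
          p ^ T * P (Fail ∩ {ω | ∀ j : Fin (m * T), ω (j : ℕ) = υ j}) ≤
            P ((Fail ∩ {ω | ∀ j : Fin (m * T), ω (j : ℕ) = υ j}) ∩ Good) := by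
        intro υ
        by_cases hne : (Fail ∩ {ω | ∀ j : Fin (m * T), ω (j : ℕ) = υ j}).Nonempty
        · have hsub := hCsubFail υ hne
          have heq : Fail ∩ {ω : ℕ → Fin k | ∀ j : Fin (m * T), ω (j : ℕ) = υ j}
              = {ω | ∀ j : Fin (m * T), ω (j : ℕ) = υ j} :=
            Set.inter_eq_right.2 hsub
          rw [heq]
          have := ext_lemma P p hP g T (m * T) υ
          exact this
        · rw [Set.not_nonempty_iff_eq_empty.1 hne]
          simp
      -- partition into cylinders
      have hUnionF : (⋃ υ : Fin (m * T) → Fin k,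
          Fail ∩ {ω | ∀ j : Fin (m * T), ω (j : ℕ) = υ j}) = Fail := by
        ext ω
        simp only [Set.mem_iUnion, Set.mem_inter_iff, Set.mem_setOf_eq]
        constructor
        · rintro ⟨υ, hf, _⟩; exact hf
        · intro hf; exact ⟨fun j => ω (j : ℕ), hf, fun j => rfl⟩
      have hUnionFG : (⋃ υ : Fin (m * T) → Fin k,
          (Fail ∩ {ω | ∀ j : Fin (m * T), ω (j : ℕ) = υ j}) ∩ Good) = Fail ∩ Good := by
        ext ω
        simp only [Set.mem_iUnion, Set.mem_inter_iff, Set.mem_setOf_eq]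
        constructor
        · rintro ⟨υ, ⟨hf, _⟩, hg⟩; exact ⟨hf, hg⟩
        · rintro ⟨hf, hg⟩; exact ⟨fun j => ω (j : ℕ), ⟨hf, fun j => rfl⟩, hg⟩
      have hdisj : Pairwise (Function.onFun Disjoint
          fun υ : Fin (m * T) → Fin k => Fail ∩ {ω | ∀ j : Fin (m * T), ω (j : ℕ) = υ j}) := by
        intro υ υ' hne
        refine Set.disjoint_left.2 ?_
        rintro ω ⟨_, hω⟩ ⟨_, hω'⟩
        obtain ⟨j, hj⟩ := Function.ne_iff.1 hne
        exact hj ((hω j).symm.trans (hω' j))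
      have hmFail : MeasurableSet Fail := fail_measurable g T m
      have hmGood : MeasurableSet Good := match_set_measurable g (m * T) T
      have hmeasC : ∀ υ : Fin (m * T) → Fin k,
          MeasurableSet (Fail ∩ {ω : ℕ → Fin k | ∀ j : Fin (m * T), ω (j : ℕ) = υ j}) :=
        fun υ => hmFail.inter (measurableSet_cyl υ)
      have hsumF : P Fail = ∑' υ : Fin (m * T) → Fin k,
          P (Fail ∩ {ω | ∀ j : Fin (m * T), ω (j : ℕ) = υ j}) := by
        conv_lhs => rw [← hUnionF]
        exact measure_iUnion hdisj hmeasC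
      have hdisj2 : Pairwise (Function.onFun Disjoint
          fun υ : Fin (m * T) → Fin k =>
            (Fail ∩ {ω | ∀ j : Fin (m * T), ω (j : ℕ) = υ j}) ∩ Good) := by
        intro υ υ' hne
        exact Set.disjoint_of_subset Set.inter_subset_left Set.inter_subset_left (hdisj hne)
      have hsumFG : P (Fail ∩ Good) = ∑' υ : Fin (m * T) → Fin k,
          P ((Fail ∩ {ω | ∀ j : Fin (m * T), ω (j : ℕ) = υ j}) ∩ Good) := by
        conv_lhs => rw [← hUnionFG]
        exact measure_iUnion hdisj2 fun υ => (hmeasC υ).inter hmGood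
      have hlow : p ^ T * P Fail ≤ P (Fail ∩ Good) := by
        rw [hsumF, hsumFG, ← ENNReal.tsum_mul_left]
        exact ENNReal.tsum_le_tsum hkey
      -- conclude
      rw [hsplit]
      have hdiffeq : Fail \ Good = Fail \ (Fail ∩ Good) := by
        ext ω; simp [Set.mem_diff]
      have hPdiff : P (Fail \ Good) = P Fail - P (Fail ∩ Good) := by
        rw [hdiffeq]
        exact measure_diff Set.inter_subset_left (hmFail.inter hmGood).nullMeasurableSet
          (measure_ne_top P _)
      rw [hPdiff]
      calc P Fail - P (Fail ∩ Good) ≤ P Fail - p ^ T * P Fail := tsub_le_tsub_left hlow _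
        _ = (1 - p ^ T) * P Fail := by
            rw [ENNReal.sub_mul (fun _ _ => measure_ne_top P _), one_mul]
        _ ≤ (1 - p ^ T) * (1 - p ^ T) ^ m := mul_le_mul_right ih _
        _ = (1 - p ^ T) ^ (m + 1) := by ring

end aux

theorem minimal_map_implies_minimality_of_ae_orbital_branch
    {X : Type*} [MetricSpace X] [CompactSpace X] {k : ℕ}
    (f : Fin k → X ≃ₜ X)
    -- the IFS contains a minimal homeomorphism `h = f_{α_s} ∘ ... ∘ f_{α_1}`
    (hmin : ∃ l : List (Fin k), l ≠ [] ∧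
      ∀ x : X, Dense (Set.range fun n : ℕ => (listComp (fun i => ⇑(f i)) l)^[n] x))
    (P : Measure (ℕ → Fin k)) [IsProbabilityMeasure P] (p : ℝ≥0∞)
    (hp0 : 0 < p) (hpk : p ≤ 1 / k)
    -- each symbol appears with conditional probability at least `p`, regardless of the past
    (hP : ∀ (n : ℕ) (υ : Fin n → Fin k) (i : Fin k),
      p * P {ω | ∀ j : Fin n, ω (j : ℕ) = υ j} ≤
        P {ω | (∀ j : Fin n, ω (j : ℕ) = υ j) ∧ ω n = i}) :
    ∃ Ω : Set (ℕ → Fin k), P Ω = 1 ∧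
      ∀ ω ∈ Ω, ∀ x : X,
        Dense (Set.range fun n : ℕ => seqComp (fun i => ⇑(f i)) ω (n + 1) x) := by
  obtain ⟨l, hlne, hld⟩ := hmin
  set fc : Fin k → X → X := fun i => ⇑(f i) with hfc
  set h : X → X := listComp fc l with hh
  set s : ℕ := l.length with hs
  have hs0 : 0 < s := List.length_pos_iff.2 hlne
  set g : ℕ → Fin k := fun i => l.get ⟨i % s, Nat.mod_lt _ hs0⟩ with hg
  set M : ℕ → Set (ℕ → Fin k) := fun N => {ω | ∃ m, ∀ i < N * s, ω (m + i) = g i} with hM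
  have hMmeas : ∀ N, MeasurableSet (M N) := by
    intro N
    have : M N = ⋃ m, {ω : ℕ → Fin k | ∀ i < N * s, ω (m + i) = g i} := by
      ext ω; simp [hM]
    rw [this]
    exact MeasurableSet.iUnion fun m => match_set_measurable g m (N * s)
  -- each M N has full measure
  have hfull : ∀ N, P (M N)ᶜ = 0 := by
    intro N
    set T : ℕ := N * s with hT
    have hsub : ∀ m, (M N)ᶜ ⊆ {ω : ℕ → Fin k | ∀ j < m, ∃ i < T, ω (j * T + i) ≠ g i} := by
      intro m ω hω j _
      simp only [hM, Set.mem_compl_iff, Set.mem_setOf_eq, not_exists] at hω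
      have := hω (j * T)
      push_neg at this
      obtain ⟨i, hi, hne⟩ := this
      exact ⟨i, hi, hne⟩
    have hbound : ∀ m, P (M N)ᶜ ≤ (1 - p ^ T) ^ m := fun m =>
      le_trans (measure_mono (hsub m)) (fail_decay P p hP g T m)
    have hlt1 : 1 - p ^ T < 1 :=
      ENNReal.sub_lt_self one_ne_top one_ne_zero (pow_ne_zero T hp0.ne')
    have htend : Filter.Tendsto (fun m : ℕ => (1 - p ^ T) ^ m) Filter.atTop (nhds 0) :=
      ENNReal.tendsto_pow_atTop_nhds_zero_of_lt_one hlt1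
    have := ge_of_tendsto' htend hbound
    exact le_antisymm this zero_le
  refine ⟨⋂ N, M N, ?_, ?_⟩
  · rw [← prob_compl_eq_zero_iff (MeasurableSet.iInter hMmeas)]
    rw [Set.compl_iInter]
    exact measure_iUnion_null fun N => hfull N
  · intro ω hω x
    have hcont : Continuous h := continuous_listComp fc (fun i => (f i).continuous) l
    rw [Metric.dense_iff]
    intro z r hr
    obtain ⟨N, hN⟩ := unif_minimal h hcont hld hr
    have hωM : ω ∈ M (N + 1) := Set.mem_iInter.1 hω (N + 1)
    obtain ⟨m, hm⟩ := hωM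
    set y : X := seqComp fc ω m x with hy
    -- key iterate identity
    have key : ∀ j, j ≤ N + 1 → seqComp fc ω (m + j * s) x = h^[j] y := by
      intro j
      induction j with
      | zero => intro _; simp [hy]
      | succ j ih =>
          intro hj1
          have hj : j ≤ N + 1 := Nat.le_of_succ_le hj1
          have hmul : m + (j + 1) * s = (m + j * s) + s := by ring
          rw [hmul, seqComp_add, ih hj]
          have hσ : (List.ofFn fun i : Fin s => ω (m + j * s + i)) = l := by
            have : (fun i : Fin s => ω (m + j * s + i)) = fun i : Fin s => l.get i := by
              funext i
              have hilt : j * s + (i : ℕ) < (N + 1) * s := by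
                calc j * s + (i : ℕ) < j * s + s := by omega
                  _ = (j + 1) * s := by ring
                  _ ≤ (N + 1) * s := Nat.mul_le_mul_right s hj1
              have := hm (j * s + (i : ℕ)) hilt
              rw [← Nat.add_assoc] at this
              have hidx : (j * s + (i : ℕ)) % s = (i : ℕ) := by
                rw [Nat.add_comm, Nat.add_mul_mod_self_right]; exact Nat.mod_eq_of_lt i.2
              rw [this]
              exact congrArg l.get (Fin.ext hidx)
            rw [this]
            exact List.ofFn_get l
          rw [seqComp_eq_listComp, hσ, ← hh, Function.iterate_succ_apply']
    -- use uniform minimality starting from h y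
    obtain ⟨j, hjN, hdist⟩ := hN (h y) z
    have hiter : h^[j] (h y) = seqComp fc ω (m + (j + 1) * s) x := by
      rw [key (j + 1) (Nat.succ_le_succ hjN), Function.iterate_succ_apply]
    refine ⟨seqComp fc ω (m + (j + 1) * s) x, ?_, ?_⟩
    · rw [Metric.mem_ball, ← hiter]
      exact hdist
    · have hpos : 0 < m + (j + 1) * s := by positivity
      refine ⟨m + (j + 1) * s - 1, ?_⟩
      simp only
      rw [Nat.sub_add_cancel hpos]
end

section
/- Let P be a probability measure on Σ = {1,...,k}^N such that each coordinate equals any given symbol with conditional probability at least p > 0 regardless of preceding outcomes. Fix a measurable set A_n ⊆ Σ that is determined by the first n coordinates, and suppose that for every cylinder of length n not contained in A_n there is a word σ of length at most ℓ such that appending σ forces membership in A_{n+ℓ}, where A_m ⊆ A_{m'} for m ≤ m'. Then P(Σ \ ⋃_n A_n) ≤ lim_{n→∞} (1 - p^ℓ)^{1 + ⌊n/ℓ⌋} = 0. -/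
open MeasureTheory Set ENNReal

namespace EscapeAux

variable {k : ℕ}

/-- The cylinder set of a word of length `n`. -/
def Cyl (n : ℕ) (υ : Fin n → Fin k) : Set (ℕ → Fin k) :=
  {ω | ∀ j : Fin n, ω (j : ℕ) = υ j}

lemma measurable_cyl (n : ℕ) (υ : Fin n → Fin k) : MeasurableSet (Cyl n υ) := by
  have h : Cyl n υ = ⋂ j : Fin n, (fun ω : ℕ → Fin k => ω (j : ℕ)) ⁻¹' {υ j} := by
    ext ω; simp [Cyl]
  rw [h]
  exact MeasurableSet.iInter fun j =>
    (measurable_pi_apply (j : ℕ)) (measurableSet_singleton (υ j))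

/-- Concatenation of words. -/
def cat {n t : ℕ} (υ : Fin n → Fin k) (σ : Fin t → Fin k) : Fin (n + t) → Fin k :=
  fun j => if h : (j : ℕ) < n then υ ⟨j, h⟩
    else σ ⟨(j : ℕ) - n, by have := j.isLt; omega⟩

lemma conj_eq_cyl {n t : ℕ} (υ : Fin n → Fin k) (σ : Fin t → Fin k) :
    {ω : ℕ → Fin k | (∀ j : Fin n, ω (j : ℕ) = υ j) ∧ ∀ j : Fin t, ω (n + j) = σ j}
      = Cyl (n + t) (cat υ σ) := by
  ext ω
  constructor
  · rintro ⟨h1, h2⟩ j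
    rw [cat]
    by_cases h : (j : ℕ) < n
    · rw [dif_pos h]; exact h1 ⟨j, h⟩
    · rw [dif_neg h]
      have h3 := h2 ⟨(j : ℕ) - n, by have := j.isLt; omega⟩
      have : n + ((j : ℕ) - n) = (j : ℕ) := by omega
      rwa [this] at h3
  · intro hω
    constructor
    · intro j
      have h := hω ⟨(j : ℕ), by have := j.isLt; omega⟩
      rwa [cat, dif_pos j.isLt] at h
    · intro j
      have h := hω ⟨n + (j : ℕ), by have := j.isLt; omega⟩
      rw [cat, dif_neg (show ¬ ((⟨n + (j : ℕ), by have := j.isLt; omega⟩ : Fin (n + t)) : ℕ) < n by simp)] at h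
      convert h using 2
      ext
      simp

end EscapeAux

open EscapeAux

theorem measure_escape_estimate
    {k : ℕ} (P : Measure (ℕ → Fin k)) [IsProbabilityMeasure P]
    (p : ℝ≥0∞) (hp0 : 0 < p) (hpk : p ≤ 1 / k)
    -- each symbol appears with conditional probability at least `p`, regardless of the past
    (hP : ∀ (n : ℕ) (υ : Fin n → Fin k) (i : Fin k),
      p * P {ω | ∀ j : Fin n, ω (j : ℕ) = υ j} ≤
        P {ω | (∀ j : Fin n, ω (j : ℕ) = υ j) ∧ ω n = i})
    (A : ℕ → Set (ℕ → Fin k)) (hAmeas : ∀ n, MeasurableSet (A n))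
    (hAmono : ∀ m m', m ≤ m' → A m ⊆ A m')
    -- `A n` is determined by the first `n` coordinates
    (hAdet : ∀ n, ∀ ω ω' : ℕ → Fin k, (∀ j < n, ω j = ω' j) → (ω ∈ A n ↔ ω' ∈ A n))
    (ℓ : ℕ) (hℓ : 0 < ℓ)
    -- every cylinder of length `n` not contained in `A n` admits a word `σ` of length
    -- `t ≤ ℓ` whose appending forces membership in `A (n + t)`
    (hforce : ∀ (n : ℕ) (υ : Fin n → Fin k),
      ¬ ({ω | ∀ j : Fin n, ω (j : ℕ) = υ j} ⊆ A n) →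
      ∃ t ≤ ℓ, ∃ σ : Fin t → Fin k,
        {ω : ℕ → Fin k | (∀ j : Fin n, ω (j : ℕ) = υ j) ∧ ∀ j : Fin t, ω (n + j) = σ j}
          ⊆ A (n + t)) :
    P (Set.univ \ ⋃ n, A n) = 0 ∧
      Filter.Tendsto (fun n : ℕ => (1 - p ^ ℓ) ^ (1 + n / ℓ)) Filter.atTop (nhds 0) ∧
      ∀ n : ℕ, P (Set.univ \ ⋃ m, A m) ≤ (1 - p ^ ℓ) ^ (1 + n / ℓ) := by
  classical
  -- `k` is positive, else there is no probability measure
  have hk : 0 < k := by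
    by_contra h
    have hk0 : k = 0 := Nat.le_zero.mp (not_lt.1 h)
    subst hk0
    have huniv : (Set.univ : Set (ℕ → Fin 0)) = ∅ := by
      ext ω; simp only [mem_univ, mem_empty_iff_false, iff_false]
      exact fun _ => (ω 0).elim0
    have h1 : P Set.univ = 1 := measure_univ
    rw [huniv, measure_empty] at h1
    exact zero_ne_one h1
  have hp1 : p ≤ 1 := by
    refine hpk.trans ?_
    rw [ENNReal.div_le_iff (by exact_mod_cast hk.ne') (by simp)]
    simpa using (Nat.one_le_cast (α := ℝ≥0∞)).2 hk
  -- key estimate: extending a cylinder by a word of length `t` keeps at least `p^t` of its mass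
  have key : ∀ (t n : ℕ) (υ : Fin n → Fin k) (σ : Fin t → Fin k),
      p ^ t * P (Cyl n υ) ≤
        P {ω : ℕ → Fin k | (∀ j : Fin n, ω (j : ℕ) = υ j) ∧ ∀ j : Fin t, ω (n + j) = σ j} := by
    intro t
    induction t with
    | zero =>
      intro n υ σ
      have hset : {ω : ℕ → Fin k | (∀ j : Fin n, ω (j : ℕ) = υ j) ∧
          ∀ j : Fin 0, ω (n + j) = σ j} = Cyl n υ := by
        ext ω; simp [Cyl]
      rw [hset, pow_zero, one_mul]
    | succ t ih =>
      intro n υ σ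
      set σ' : Fin t → Fin k := fun j => σ j.castSucc with hσ'
      have hstep := hP (n + t) (cat υ σ') (σ (Fin.last t))
      have hE : {ω : ℕ → Fin k | (∀ j : Fin n, ω (j : ℕ) = υ j) ∧
            ∀ j : Fin (t + 1), ω (n + j) = σ j}
          = {ω : ℕ → Fin k | (∀ j : Fin (n + t), ω (j : ℕ) = cat υ σ' j) ∧
            ω (n + t) = σ (Fin.last t)} := by
        have h1 : ∀ ω : ℕ → Fin k, (∀ j : Fin (n + t), ω (j : ℕ) = cat υ σ' j) ↔
            ((∀ j : Fin n, ω (j : ℕ) = υ j) ∧ ∀ j : Fin t, ω (n + j) = σ' j) := by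
          intro ω
          exact (Set.ext_iff.mp (conj_eq_cyl υ σ') ω).symm
        ext ω
        simp only [mem_setOf_eq, h1]
        constructor
        · rintro ⟨hυ, hσ⟩
          refine ⟨⟨hυ, fun j => ?_⟩, ?_⟩
          · have := hσ j.castSucc
            simpa [hσ'] using this
          · have := hσ (Fin.last t)
            simpa using this
        · rintro ⟨⟨hυ, hmid⟩, hlast⟩
          refine ⟨hυ, fun j => ?_⟩
          induction j using Fin.lastCases with
          | last => simpa using hlast
          | cast j => simpa [hσ'] using hmid j
      rw [hE]
      calc p ^ (t + 1) * P (Cyl n υ) = p * (p ^ t * P (Cyl n υ)) := by ring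
        _ ≤ p * P {ω : ℕ → Fin k | (∀ j : Fin n, ω (j : ℕ) = υ j) ∧
              ∀ j : Fin t, ω (n + j) = σ' j} := mul_le_mul_right (ih n υ σ') p
        _ = p * P (Cyl (n + t) (cat υ σ')) := by rw [conj_eq_cyl]
        _ ≤ _ := hstep
  -- one-block decay estimate
  have step : ∀ n : ℕ, P ((A (n + ℓ))ᶜ) ≤ (1 - p ^ ℓ) * P ((A n)ᶜ) := by
    intro n
    set bad : Finset (Fin n → Fin k) :=
      Finset.univ.filter (fun υ => ¬ Cyl n υ ⊆ A n) with hbaddef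
    have hcover : (A n)ᶜ = ⋃ υ ∈ bad, Cyl n υ := by
      ext ω
      simp only [mem_compl_iff, mem_iUnion, exists_prop, hbaddef, Finset.mem_filter,
        Finset.mem_univ, true_and]
      constructor
      · intro hω
        refine ⟨fun j => ω (j : ℕ), fun hsub => hω (hsub fun j => rfl), fun j => rfl⟩
      · rintro ⟨υ, hbadυ, hmem⟩ hA
        apply hbadυ
        intro ω' hω'
        refine (hAdet n ω' ω fun j hj => ?_).mpr hA
        rw [hω' ⟨j, hj⟩, hmem ⟨j, hj⟩]
    have hsub : ((A (n + ℓ))ᶜ : Set (ℕ → Fin k)) ⊆ ⋃ υ ∈ bad, Cyl n υ := by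
      rw [← hcover]
      exact compl_subset_compl.2 (hAmono n (n + ℓ) (Nat.le_add_right n ℓ))
    have hdecomp : ((A (n + ℓ))ᶜ : Set (ℕ → Fin k))
        = ⋃ υ ∈ bad, (Cyl n υ ∩ (A (n + ℓ))ᶜ) := by
      ext ω
      simp only [mem_iUnion, exists_prop, mem_inter_iff]
      constructor
      · intro hω
        obtain ⟨υ, hυ, hm⟩ := by simpa only [mem_iUnion, exists_prop] using hsub hω
        exact ⟨υ, hυ, hm, hω⟩
      · rintro ⟨υ, _, _, hω⟩; exact hω
    -- per-cylinder estimate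
    have hper : ∀ υ ∈ bad, P (Cyl n υ ∩ (A (n + ℓ))ᶜ) ≤ (1 - p ^ ℓ) * P (Cyl n υ) := by
      intro υ hυ
      have hbadυ : ¬ Cyl n υ ⊆ A n := by
        simpa [hbaddef] using hυ
      obtain ⟨t, ht, σ, hforceσ⟩ := hforce n υ hbadυ
      set D : Set (ℕ → Fin k) :=
        {ω : ℕ → Fin k | (∀ j : Fin n, ω (j : ℕ) = υ j) ∧ ∀ j : Fin t, ω (n + j) = σ j}
        with hDdef
      have hDmeas : MeasurableSet D := by
        rw [hDdef, conj_eq_cyl]; exact measurable_cyl _ _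
      have hDsubCyl : D ⊆ Cyl n υ := fun ω hω => hω.1
      have hDA : D ⊆ A (n + ℓ) := hforceσ.trans (hAmono (n + t) (n + ℓ) (by omega))
      have h1 : Cyl n υ ∩ (A (n + ℓ))ᶜ ⊆ Cyl n υ \ D := by
        rintro ω ⟨h1, h2⟩
        exact ⟨h1, fun hD => h2 (hDA hD)⟩
      have h2 : P (Cyl n υ \ D) = P (Cyl n υ) - P D :=
        measure_diff hDsubCyl hDmeas.nullMeasurableSet (measure_ne_top P D)
      have h3 : p ^ ℓ * P (Cyl n υ) ≤ P D := by
        refine le_trans ?_ (key t n υ σ)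
        exact mul_le_mul_left (pow_le_pow_of_le_one zero_le hp1 ht) _
      calc P (Cyl n υ ∩ (A (n + ℓ))ᶜ) ≤ P (Cyl n υ \ D) := measure_mono h1
        _ = P (Cyl n υ) - P D := h2
        _ ≤ P (Cyl n υ) - p ^ ℓ * P (Cyl n υ) := tsub_le_tsub_left h3 _
        _ = (1 - p ^ ℓ) * P (Cyl n υ) := by
            rw [ENNReal.sub_mul (fun _ _ => measure_ne_top P _), one_mul]
    -- cylinders are pairwise disjoint
    have hdisj : (bad : Set (Fin n → Fin k)).PairwiseDisjoint (Cyl n) := by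
      intro υ _ υ' _ hne
      refine Set.disjoint_left.2 fun ω hω hω' => hne ?_
      funext j
      rw [← hω j, ← hω' j]
    have hsum : ∑ υ ∈ bad, P (Cyl n υ) = P ((A n)ᶜ) := by
      rw [hcover]
      exact (measure_biUnion_finset hdisj fun υ _ => measurable_cyl n υ).symm
    calc P ((A (n + ℓ))ᶜ) = P (⋃ υ ∈ bad, (Cyl n υ ∩ (A (n + ℓ))ᶜ)) := by rw [← hdecomp]
      _ ≤ ∑ υ ∈ bad, P (Cyl n υ ∩ (A (n + ℓ))ᶜ) := measure_biUnion_finset_le bad _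
      _ ≤ ∑ υ ∈ bad, (1 - p ^ ℓ) * P (Cyl n υ) := Finset.sum_le_sum hper
      _ = (1 - p ^ ℓ) * ∑ υ ∈ bad, P (Cyl n υ) := by rw [Finset.mul_sum]
      _ = (1 - p ^ ℓ) * P ((A n)ᶜ) := by rw [hsum]
  -- iterate the one-block estimate
  have iter : ∀ m : ℕ, P ((A (m * ℓ))ᶜ) ≤ (1 - p ^ ℓ) ^ m := by
    intro m
    induction m with
    | zero => simpa using prob_le_one
    | succ m ih =>
      have : (m + 1) * ℓ = m * ℓ + ℓ := by ring
      rw [this]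
      calc P ((A (m * ℓ + ℓ))ᶜ) ≤ (1 - p ^ ℓ) * P ((A (m * ℓ))ᶜ) := step (m * ℓ)
        _ ≤ (1 - p ^ ℓ) * (1 - p ^ ℓ) ^ m := mul_le_mul_right ih _
        _ = (1 - p ^ ℓ) ^ (m + 1) := by ring
  -- claim 3
  have claim3 : ∀ n : ℕ, P (Set.univ \ ⋃ m, A m) ≤ (1 - p ^ ℓ) ^ (1 + n / ℓ) := by
    intro n
    refine le_trans (measure_mono ?_) (iter (1 + n / ℓ))
    rintro ω ⟨-, hω⟩
    exact fun hA => hω (mem_iUnion.2 ⟨(1 + n / ℓ) * ℓ, hA⟩)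
  -- claim 2
  have hblt : 1 - p ^ ℓ < 1 :=
    ENNReal.sub_lt_self one_ne_top one_ne_zero (pow_ne_zero ℓ hp0.ne')
  have hexp : Filter.Tendsto (fun n : ℕ => 1 + n / ℓ) Filter.atTop Filter.atTop :=
    Filter.tendsto_atTop_atTop.2 fun b =>
      ⟨b * ℓ, fun n hn => le_trans ((Nat.le_div_iff_mul_le hℓ).2 hn) (Nat.le_add_left _ _)⟩
  have claim2 : Filter.Tendsto (fun n : ℕ => (1 - p ^ ℓ) ^ (1 + n / ℓ))
      Filter.atTop (nhds 0) :=
    (ENNReal.tendsto_pow_atTop_nhds_zero_of_lt_one hblt).comp hexp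
  refine ⟨?_, claim2, claim3⟩
  exact le_antisymm (ge_of_tendsto claim2 (Filter.Eventually.of_forall claim3)) zero_le
end

section
/- Suppose F, G, g are C^1 diffeomorphisms of the circle, a is a hyperbolic attracting fixed point of g (|Dg(a)| < 1), V is a nondegenerate closed arc with F(V) contained in the basin of attraction of a, and G(a) lies in the interior of V. Then for all sufficiently large m, the map G ∘ g^m ∘ F is a contraction of V into itself and hence has a unique fixed point in V, which is a hyperbolic attracting fixed point of G ∘ g^m ∘ F. -/
open Set Filter
open scoped NNReal

private lemma myContDiffIterate {f : ℝ → ℝ} (hf : ContDiff ℝ 1 f) :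
    ∀ n, ContDiff ℝ 1 f^[n]
  | 0 => by simpa using contDiff_id
  | (n + 1) => by
      rw [Function.iterate_succ']
      exact hf.comp (myContDiffIterate hf n)

private lemma myLipOfContDiff {f : ℝ → ℝ} (hf : ContDiff ℝ 1 f) (p q : ℝ) :
    ∃ L : ℝ≥0, LipschitzOnWith L f (Set.Icc p q) := by
  obtain ⟨C, hC⟩ := isCompact_Icc.exists_bound_of_continuousOn
    ((hf.continuous_deriv le_rfl).continuousOn (s := Set.Icc p q))
  refine ⟨Real.toNNReal C, (convex_Icc p q).lipschitzOnWith_of_nnnorm_deriv_le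
    (fun x _ => (hf.differentiable one_ne_zero).differentiableAt) (fun x hx => ?_)⟩
  have h1 : ‖deriv f x‖ ≤ C := hC x hx
  have h2 : ((‖deriv f x‖₊ : ℝ≥0) : ℝ) ≤ ((Real.toNNReal C : ℝ≥0) : ℝ) := by
    rw [coe_nnnorm, Real.coe_toNNReal']
    exact h1.trans (le_max_left _ _)
  exact_mod_cast h2

private lemma myLipIter {f : ℝ → ℝ} {s : Set ℝ} {K : ℝ≥0} (hl : LipschitzOnWith K f s)
    (hm : Set.MapsTo f s s) : ∀ n, LipschitzOnWith (K ^ n) f^[n] s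
  | 0 => by simpa using (LipschitzWith.id (α := ℝ)).lipschitzOnWith (s := s)
  | (n + 1) => by
      rw [Function.iterate_succ', show K ^ (n + 1) = K * K ^ n by ring]
      exact hl.comp (myLipIter hl hm n) (hm.iterate n)

private lemma myFixed {f : ℝ → ℝ} {p q : ℝ} (hpq : p ≤ q)
    (hm : Set.MapsTo f (Set.Icc p q) (Set.Icc p q)) {K : ℝ≥0} (hK : K < 1)
    (hl : LipschitzOnWith K f (Set.Icc p q)) :
    ∃ c ∈ Set.Icc p q, f c = c ∧ ∀ c' ∈ Set.Icc p q, f c' = c' → c' = c := by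
  haveI : Nonempty (Set.Icc p q) := ⟨⟨p, le_refl p, hpq⟩⟩
  haveI : CompleteSpace (Set.Icc p q) := isClosed_Icc.completeSpace_coe
  have hc : ContractingWith K (hm.restrict f _ _) := ⟨hK, hl.mapsToRestrict hm⟩
  set c := ContractingWith.fixedPoint (hm.restrict f _ _) hc with hcdef
  have hfix : Function.IsFixedPt (hm.restrict f _ _) c := hc.fixedPoint_isFixedPt
  have hfixval : f (c : ℝ) = (c : ℝ) := by
    have := congrArg Subtype.val hfix
    rwa [Set.MapsTo.val_restrict_apply] at this
  refine ⟨(c : ℝ), c.2, hfixval, fun c' hc' hfc' => ?_⟩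
  have hfix' : Function.IsFixedPt (hm.restrict f _ _) ⟨c', hc'⟩ := by
    apply Subtype.ext
    rwa [Set.MapsTo.val_restrict_apply]
  have := hc.fixedPoint_unique hfix'
  exact congrArg Subtype.val this

private lemma myDerivLe {f : ℝ → ℝ} {K : ℝ≥0} {s : Set ℝ} {q : ℝ} (hq : s ∈ nhds q)
    (hd : DifferentiableAt ℝ f q) (hl : LipschitzOnWith K f s) :
    |deriv f q| ≤ (K : ℝ) := by
  have h := hd.hasDerivAt
  rw [hasDerivAt_iff_tendsto_slope] at h
  have habs : Tendsto (fun x => |slope f q x|) (nhdsWithin q {q}ᶜ) (nhds |deriv f q|) :=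
    continuous_abs.continuousAt.tendsto.comp h
  refine le_of_tendsto habs ?_
  have hself : ∀ᶠ x in nhdsWithin q {q}ᶜ, x ∈ s ∧ x ≠ q := by
    filter_upwards [nhdsWithin_le_nhds hq, self_mem_nhdsWithin] with x hx hx'
    exact ⟨hx, hx'⟩
  filter_upwards [hself] with x hx
  obtain ⟨hxs, hxq⟩ := hx
  have hqs : q ∈ s := mem_of_mem_nhds hq
  have hdist : dist (f x) (f q) ≤ (K : ℝ) * dist x q := hl.dist_le_mul x hxs q hqs
  rw [Real.dist_eq, Real.dist_eq] at hdist
  have hxq0 : 0 < |x - q| := abs_pos.mpr (sub_ne_zero.mpr hxq)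
  rw [slope_def_field]
  rw [div_eq_mul_inv, ← div_eq_mul_inv, abs_div]
  rw [div_le_iff₀ hxq0]
  exact hdist

/-- Circle maps are represented by their degree-one lifts: `C¹` diffeomorphisms of the
circle correspond to strictly monotone `C¹` maps `ℝ → ℝ` commuting with `x ↦ x + 1`
and with nonvanishing derivative of the inverse (here we only need the lift data). -/
theorem contraction_return_map_hyperbolic_fixed_point
    (F G g : ℝ → ℝ)
    (hF : ContDiff ℝ 1 F) (hG : ContDiff ℝ 1 G) (hg : ContDiff ℝ 1 g)
    (hFm : StrictMono F) (hGm : StrictMono G) (hgm : StrictMono g)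
    (hFl : ∀ x, F (x + 1) = F x + 1) (hGl : ∀ x, G (x + 1) = G x + 1)
    (hgl : ∀ x, g (x + 1) = g x + 1)
    (a : ℝ) (ha : g a = a) (hhyp : |deriv g a| < 1)
    (v₁ v₂ : ℝ) (hv : v₁ < v₂) (hv1 : v₂ - v₁ < 1)
    (hFV : F '' Set.Icc v₁ v₂ ⊆ {x | Tendsto (fun n : ℕ => g^[n] x) atTop (nhds a)})
    (hGa : G a ∈ Set.Ioo v₁ v₂) :
    ∃ M : ℕ, ∀ m ≥ M,
      Set.MapsTo (G ∘ g^[m] ∘ F) (Set.Icc v₁ v₂) (Set.Icc v₁ v₂) ∧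
      (∃ K : NNReal, K < 1 ∧ LipschitzOnWith K (G ∘ g^[m] ∘ F) (Set.Icc v₁ v₂)) ∧
      ∃ q ∈ Set.Icc v₁ v₂, (G ∘ g^[m] ∘ F) q = q ∧
        (∀ q' ∈ Set.Icc v₁ v₂, (G ∘ g^[m] ∘ F) q' = q' → q' = q) ∧
        |deriv (G ∘ g^[m] ∘ F) q| < 1 := by
  -- the contraction rate
  set lam : ℝ := (|deriv g a| + 1) / 2 with hlamdef
  have hlam0 : 0 < lam := by positivity
  have hlam1 : lam < 1 := by rw [hlamdef]; linarith
  have hclam : |deriv g a| < lam := by rw [hlamdef]; linarith [abs_nonneg (deriv g a)]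
  -- a neighborhood where |g'| < lam
  have hderivg : Continuous (deriv g) := hg.continuous_deriv le_rfl
  have htend : Tendsto (fun x => |deriv g x|) (nhds a) (nhds |deriv g a|) :=
    continuous_abs.continuousAt.tendsto.comp (hderivg.tendsto a)
  have hev : ∀ᶠ x in nhds a, |deriv g x| < lam := htend.eventually_lt_const hclam
  obtain ⟨δ, hδ0, hδsub⟩ := Metric.mem_nhds_iff.mp hev
  set d : ℝ := δ / 2 with hddef
  have hd0 : 0 < d := by positivity
  set J : Set ℝ := Set.Icc (a - d) (a + d) with hJdef
  have memJ : ∀ x : ℝ, x ∈ J ↔ |x - a| ≤ d := by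
    intro x
    rw [hJdef, Set.mem_Icc, abs_le]
    constructor <;> intro h <;> constructor <;> linarith [h.1, h.2]
  have haJ : a ∈ J := (memJ a).2 (by simp [hd0.le])
  have hJnhds : J ∈ nhds a := Icc_mem_nhds (by linarith) (by linarith)
  have hJball : ∀ x ∈ J, x ∈ Metric.ball a δ := by
    intro x hx
    rw [Metric.mem_ball, Real.dist_eq]
    have := (memJ x).1 hx
    linarith
  set Λ : ℝ≥0 := Real.toNNReal lam with hΛdef
  have hΛcoe : (Λ : ℝ) = lam := Real.coe_toNNReal _ hlam0.le
  have hlipg : LipschitzOnWith Λ g J := by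
    refine (convex_Icc _ _).lipschitzOnWith_of_nnnorm_deriv_le
      (fun x _ => (hg.differentiable one_ne_zero).differentiableAt) (fun x hx => ?_)
    have hb : |deriv g x| < lam := hδsub (hJball x hx)
    have h2 : ((‖deriv g x‖₊ : ℝ≥0) : ℝ) ≤ (Λ : ℝ) := by
      rw [coe_nnnorm, Real.norm_eq_abs, hΛcoe]
      exact hb.le
    exact_mod_cast h2
  have hmapsg : Set.MapsTo g J J := by
    intro x hx
    have h1 : dist (g x) (g a) ≤ (Λ : ℝ) * dist x a := hlipg.dist_le_mul x hx a haJ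
    rw [Real.dist_eq, Real.dist_eq, ha, hΛcoe] at h1
    have h2 : |x - a| ≤ d := (memJ x).1 hx
    refine (memJ _).2 ?_
    nlinarith [abs_nonneg (x - a), abs_nonneg (g x - a)]
  have hlipgn : ∀ n, LipschitzOnWith (Λ ^ n) g^[n] J := myLipIter hlipg hmapsg
  have hmapsgn : ∀ n, Set.MapsTo g^[n] J J := fun n => hmapsg.iterate n
  have hga : ∀ n, g^[n] a = a := fun n => Function.iterate_fixed ha n
  have hdecay : ∀ n, ∀ x ∈ J, |g^[n] x - a| ≤ lam ^ n * d := by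
    intro n x hx
    have h1 : dist (g^[n] x) (g^[n] a) ≤ ((Λ ^ n : ℝ≥0) : ℝ) * dist x a :=
      (hlipgn n).dist_le_mul x hx a haJ
    rw [Real.dist_eq, Real.dist_eq, hga n] at h1
    have hcoe : ((Λ ^ n : ℝ≥0) : ℝ) = lam ^ n := by
      push_cast [hΛcoe]; ring
    rw [hcoe] at h1
    have h2 : |x - a| ≤ d := (memJ x).1 hx
    nlinarith [pow_nonneg hlam0.le n, abs_nonneg (x - a)]
  -- uniform arrival time N using monotonicity
  have hx1 : Tendsto (fun n : ℕ => g^[n] (F v₁)) atTop (nhds a) :=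
    hFV ⟨v₁, ⟨le_rfl, hv.le⟩, rfl⟩
  have hx2 : Tendsto (fun n : ℕ => g^[n] (F v₂)) atTop (nhds a) :=
    hFV ⟨v₂, ⟨hv.le, le_rfl⟩, rfl⟩
  have h1 : ∀ᶠ n : ℕ in atTop, g^[n] (F v₁) ∈ J := hx1 hJnhds
  have h2 : ∀ᶠ n : ℕ in atTop, g^[n] (F v₂) ∈ J := hx2 hJnhds
  obtain ⟨N, hN⟩ := (h1.and h2).exists
  have hmapsFV : Set.MapsTo F (Set.Icc v₁ v₂) (Set.Icc (F v₁) (F v₂)) := fun x hx =>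
    ⟨hFm.monotone hx.1, hFm.monotone hx.2⟩
  have hmapsN : Set.MapsTo g^[N] (Set.Icc (F v₁) (F v₂)) J := by
    intro y hy
    have hmono : Monotone g^[N] := hgm.monotone.iterate N
    exact ⟨le_trans hN.1.1 (hmono hy.1), le_trans (hmono hy.2) hN.2.2⟩
  -- Lipschitz constants
  obtain ⟨LF, hLF⟩ := myLipOfContDiff hF v₁ v₂
  obtain ⟨LN, hLN⟩ := myLipOfContDiff (myContDiffIterate hg N) (F v₁) (F v₂)
  obtain ⟨LG, hLG⟩ := myLipOfContDiff hG (a - d) (a + d)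
  set ε : ℝ := min (G a - v₁) (v₂ - G a) with hεdef
  have hε0 : 0 < ε := lt_min (by linarith [hGa.1]) (by linarith [hGa.2])
  set B : ℝ := (LG : ℝ) * d + (LG : ℝ) * (LN : ℝ) * (LF : ℝ) + 1 with hBdef
  have hB0 : 0 < B := by positivity
  have htendpow : Tendsto (fun k : ℕ => lam ^ k * B) atTop (nhds 0) := by
    have := (tendsto_pow_atTop_nhds_zero_of_lt_one hlam0.le hlam1).mul_const B
    simpa using this
  obtain ⟨k₀, hk₀⟩ := (htendpow.eventually_lt_const (lt_min hε0 one_pos)).exists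
  refine ⟨N + k₀, fun m hm => ?_⟩
  set p := m - N with hpdef
  have hpN : p + N = m := by omega
  have hpk : k₀ ≤ p := by omega
  have hpow : lam ^ p ≤ lam ^ k₀ := pow_le_pow_of_le_one hlam0.le hlam1.le hpk
  have hsm : lam ^ p * B < min ε 1 :=
    lt_of_le_of_lt (mul_le_mul_of_nonneg_right hpow hB0.le) hk₀
  -- function decomposition
  have hfun : G ∘ g^[m] ∘ F = G ∘ (g^[p] ∘ (g^[N] ∘ F)) := by
    funext x
    simp only [Function.comp_apply]
    rw [← hpN, Function.iterate_add_apply]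
  -- key pointwise estimate: image lands in Ioo v₁ v₂
  have hkey : ∀ x ∈ Set.Icc v₁ v₂, (G ∘ g^[m] ∘ F) x ∈ Set.Ioo v₁ v₂ := by
    intro x hx
    rw [hfun]
    have hy0 : F x ∈ Set.Icc (F v₁) (F v₂) := hmapsFV hx
    have hy1 : g^[N] (F x) ∈ J := hmapsN hy0
    have hy2 : g^[p] (g^[N] (F x)) ∈ J := hmapsgn p hy1
    have hd2 : |g^[p] (g^[N] (F x)) - a| ≤ lam ^ p * d := hdecay p _ hy1
    have hGd : dist (G (g^[p] (g^[N] (F x)))) (G a) ≤ (LG : ℝ) *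
        dist (g^[p] (g^[N] (F x))) a := hLG.dist_le_mul _ hy2 a haJ
    rw [Real.dist_eq, Real.dist_eq] at hGd
    have hlt : |G (g^[p] (g^[N] (F x))) - G a| < ε := by
      have hb1 : (LG : ℝ) * (lam ^ p * d) ≤ lam ^ p * B := by
        have hexp : lam ^ p * B = (LG : ℝ) * (lam ^ p * d) +
            lam ^ p * ((LG : ℝ) * (LN : ℝ) * (LF : ℝ)) + lam ^ p := by
          rw [hBdef]; ring
        have h1 : 0 ≤ lam ^ p * ((LG : ℝ) * (LN : ℝ) * (LF : ℝ)) :=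
          mul_nonneg (pow_nonneg hlam0.le p)
            (mul_nonneg (mul_nonneg LG.coe_nonneg LN.coe_nonneg) LF.coe_nonneg)
        have h2 : 0 ≤ lam ^ p := pow_nonneg hlam0.le p
        linarith
      have hb2 : lam ^ p * B < ε := lt_of_lt_of_le hsm (min_le_left _ _)
      have hb3 : (LG : ℝ) * |g^[p] (g^[N] (F x)) - a| ≤ (LG : ℝ) * (lam ^ p * d) :=
        mul_le_mul_of_nonneg_left hd2 LG.coe_nonneg
      calc |G (g^[p] (g^[N] (F x))) - G a| ≤ (LG : ℝ) * |g^[p] (g^[N] (F x)) - a| := hGd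
        _ ≤ (LG : ℝ) * (lam ^ p * d) := hb3
        _ ≤ lam ^ p * B := hb1
        _ < ε := hb2
    rw [abs_lt] at hlt
    have he1 : ε ≤ G a - v₁ := min_le_left _ _
    have he2 : ε ≤ v₂ - G a := min_le_right _ _
    simp only [Function.comp_apply, Set.mem_Ioo]
    constructor <;> linarith [hlt.1, hlt.2]
  have hmapsTo : Set.MapsTo (G ∘ g^[m] ∘ F) (Set.Icc v₁ v₂) (Set.Icc v₁ v₂) := fun x hx =>
    Set.Ioo_subset_Icc_self (hkey x hx)
  -- Lipschitz constant
  have hmapsNF : Set.MapsTo (g^[N] ∘ F) (Set.Icc v₁ v₂) J := hmapsN.comp hmapsFV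
  have hmapsPNF : Set.MapsTo (g^[p] ∘ (g^[N] ∘ F)) (Set.Icc v₁ v₂) J :=
    (hmapsgn p).comp hmapsNF
  have hlipBA : LipschitzOnWith (LN * LF) (g^[N] ∘ F) (Set.Icc v₁ v₂) :=
    hLN.comp hLF hmapsFV
  have hlipCBA : LipschitzOnWith (Λ ^ p * (LN * LF)) (g^[p] ∘ (g^[N] ∘ F))
      (Set.Icc v₁ v₂) := (hlipgn p).comp hlipBA hmapsNF
  have hlipAll : LipschitzOnWith (LG * (Λ ^ p * (LN * LF))) (G ∘ g^[m] ∘ F)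
      (Set.Icc v₁ v₂) := by
    rw [hfun]
    exact hLG.comp hlipCBA hmapsPNF
  set K : ℝ≥0 := LG * (Λ ^ p * (LN * LF)) with hKdef
  have hKcoe : (K : ℝ) = (LG : ℝ) * (lam ^ p * ((LN : ℝ) * (LF : ℝ))) := by
    rw [hKdef]
    push_cast [hΛcoe]
    ring
  have hK1 : K < 1 := by
    rw [← NNReal.coe_lt_coe, NNReal.coe_one, hKcoe]
    have hb2 : lam ^ p * B < 1 := lt_of_lt_of_le hsm (min_le_right _ _)
    have hble : (LG : ℝ) * (LN : ℝ) * (LF : ℝ) ≤ B := by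
      rw [hBdef]
      have := mul_nonneg LG.coe_nonneg hd0.le
      linarith
    have h3 : (LG : ℝ) * (lam ^ p * ((LN : ℝ) * (LF : ℝ))) =
        lam ^ p * ((LG : ℝ) * (LN : ℝ) * (LF : ℝ)) := by ring
    rw [h3]
    calc lam ^ p * ((LG : ℝ) * (LN : ℝ) * (LF : ℝ)) ≤ lam ^ p * B :=
          mul_le_mul_of_nonneg_left hble (pow_nonneg hlam0.le p)
      _ < 1 := hb2
  -- fixed point
  obtain ⟨q, hqmem, hqfix, hquniq⟩ := myFixed hv.le hmapsTo hK1 hlipAll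
  have hqI : q ∈ Set.Ioo v₁ v₂ := hqfix ▸ hkey q hqmem
  have hdiff : Differentiable ℝ (G ∘ g^[m] ∘ F) :=
    (hG.differentiable one_ne_zero).comp
      (((hg.differentiable one_ne_zero).iterate m).comp (hF.differentiable one_ne_zero))
  have hderivle : |deriv (G ∘ g^[m] ∘ F) q| ≤ (K : ℝ) :=
    myDerivLe (isOpen_Ioo.mem_nhds hqI) (hdiff q)
      (hlipAll.mono Set.Ioo_subset_Icc_self)
  have hK1' : (K : ℝ) < 1 := by exact_mod_cast hK1
  exact ⟨hmapsTo, ⟨K, hK1, hlipAll⟩, q, hqmem, hqfix, hquniq,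
    lt_of_le_of_lt hderivle hK1'⟩
end

section
/- Let f_1,...,f_k be orientation-preserving homeomorphisms of the circle generating a forward and backward minimal IFS, and assume some element of the semigroup is not conjugate to a rotation. Then the periodic points of IFS(f_1,...,f_k) are dense in S^1, where a point q is periodic if q is a fixed point of some element h of the semigroup. -/
open Set Function Filter

noncomputable section

namespace IFSAux

local notation "𝕊" => AddCircle (1 : ℝ)

def pr (x : ℝ) : 𝕊 := (x : 𝕊)

lemma pr_surjective : Function.Surjective pr := fun q => Quotient.inductionOn' q (fun x => ⟨x, rfl⟩)

lemma pr_continuous : Continuous pr := continuous_quotient_mk'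

lemma pr_eq_iff {x y : ℝ} : pr x = pr y ↔ ∃ n : ℤ, y = x + n := by
  unfold pr
  rw [show ((x : ℝ) : 𝕊) = QuotientAddGroup.mk x from rfl,
    show ((y : ℝ) : 𝕊) = QuotientAddGroup.mk y from rfl, QuotientAddGroup.eq]
  constructor
  · intro h
    rw [AddSubgroup.mem_zmultiples_iff] at h
    obtain ⟨n, hn⟩ := h
    refine ⟨n, ?_⟩
    have : (n : ℝ) = -x + y := by simpa using hn
    linarith
  · rintro ⟨n, rfl⟩
    rw [AddSubgroup.mem_zmultiples_iff]
    exact ⟨n, by simp⟩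

lemma pr_add_int (x : ℝ) (n : ℤ) : pr (x + n) = pr x := (pr_eq_iff.2 ⟨n, rfl⟩).symm

lemma dist_pr_le (x y : ℝ) : dist (pr x) (pr y) ≤ |x - y| := by
  rw [dist_eq_norm]
  have h1 : pr x - pr y = ((x - y : ℝ) : 𝕊) := by
    rw [AddCircle.coe_sub]; rfl
  rw [h1]
  have h := AddCircle.norm_eq (p := 1) (x := x - y)
  simp only [inv_one, one_mul, mul_one] at h
  rw [h]
  calc |x - y - (round (x-y) : ℝ)| ≤ |x - y - ((0:ℤ) : ℝ)| := round_le (x - y) 0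
  _ = |x - y| := by norm_num

/-- closed balls in the circle are arcs -/
lemma closedBall_eq_arc {c : ℝ} {ρ : ℝ} (hρ : 0 < ρ) :
    Metric.closedBall (pr c) ρ = pr '' Icc (c - ρ) (c + ρ) := by
  ext q
  constructor
  · intro hq
    obtain ⟨y, rfl⟩ := pr_surjective q
    have hy : y ∈ (QuotientAddGroup.mk ⁻¹' Metric.closedBall ((c : 𝕊)) ρ) := hq
    rw [AddCircle.coe_real_preimage_closedBall_eq_iUnion] at hy
    obtain ⟨z, hz⟩ := mem_iUnion.1 hy
    simp only [Metric.mem_closedBall, Real.dist_eq, zsmul_eq_mul, mul_one] at hz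
    obtain ⟨h1, h2⟩ := abs_le.1 hz
    refine ⟨y - z, ⟨by linarith, by linarith⟩, ?_⟩
    exact (by simpa using pr_add_int (y - (z:ℝ)) z : pr y = pr (y - (z:ℝ))).symm
  · rintro ⟨x, hx, rfl⟩
    refine Metric.mem_closedBall.2 (le_trans (dist_pr_le x c) (abs_le.2 ⟨?_, ?_⟩))
    · linarith [hx.1]
    · linarith [hx.2]

/-- proper closed arcs mapped into themselves by a circle map with monotone
continuous commuting lift contain a fixed point. -/
lemma fixed_point_of_mapsTo {L : ℝ → ℝ} (hLm : Monotone L) (hLc : Continuous L)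
    {g : 𝕊 → 𝕊} (hcomm : ∀ x, g (pr x) = pr (L x)) {s t : ℝ} (hst : s ≤ t) (hts : t - s < 1)
    (hmaps : ∀ x ∈ Icc s t, g (pr x) ∈ pr '' Icc s t) :
    ∃ q ∈ pr '' Icc s t, g q = q := by
  -- L s = y + j for some y ∈ [s,t], j : ℤ
  have hs' : pr (L s) ∈ pr '' Icc s t := hcomm s ▸ hmaps s ⟨le_refl s, hst⟩
  obtain ⟨y, hy, hyeq⟩ := hs'
  obtain ⟨j, hj⟩ : ∃ j : ℤ, L s = y + j := by
    obtain ⟨n, hn⟩ := pr_eq_iff.1 hyeq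
    exact ⟨n, hn⟩
  -- no value of L on [s,t] lies in a "gap"
  have hgap : ∀ x ∈ Icc s t, ∀ n : ℤ, ¬ (((t : ℝ) + n) < L x ∧ L x < s + n + 1) := by
    intro x hx n ⟨hn1, hn2⟩
    have := hmaps x hx
    rw [hcomm x] at this
    obtain ⟨y', hy', hy'eq⟩ := this
    obtain ⟨m, hm⟩ := pr_eq_iff.1 hy'eq
    -- L x = y' + m with y' ∈ [s,t]
    rcases le_or_gt m n with h | h
    · have : L x ≤ t + n := by
        have : (m:ℝ) ≤ n := by exact_mod_cast h
        linarith [hy'.2]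
      linarith
    · have : s + n + 1 ≤ L x := by
        have : (n:ℝ) + 1 ≤ m := by exact_mod_cast h
        linarith [hy'.1]
      linarith
  -- L maps [s,t] into [s+j, t+j]
  have hLs_mem : L s ∈ Icc (s + (j:ℝ)) (t + j) := ⟨by linarith [hy.1], by linarith [hy.2]⟩
  have hrange : ∀ x ∈ Icc s t, L x ∈ Icc (s + (j:ℝ)) (t + j) := by
    intro x hx
    have hlow : s + (j:ℝ) ≤ L x := le_trans hLs_mem.1 (hLm hx.1)
    refine ⟨hlow, ?_⟩
    by_contra hup
    push_neg at hup
    -- L x > t + j ; consider c in the gap (t+j, s+j+1)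
    set c : ℝ := ((t + j) + (s + j + 1)) / 2 with hc
    have hgap1 : t + (j:ℝ) < c := by rw [hc]; linarith
    have hgap2 : c < s + (j:ℝ) + 1 := by rw [hc]; linarith
    have hLx : s + (j:ℝ) + 1 ≤ L x := by
      by_contra hLx
      push_neg at hLx
      exact hgap x hx j ⟨hup, hLx⟩
    have hcmem : c ∈ Icc (L s) (L x) := ⟨by linarith [hLs_mem.2], by linarith⟩
    obtain ⟨ξ, hξ, hξc⟩ := intermediate_value_Icc hx.1 (hLc.continuousOn) hcmem
    have hξst : ξ ∈ Icc s t := ⟨hξ.1, le_trans hξ.2 hx.2⟩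
    exact hgap ξ hξst j ⟨by rw [hξc]; exact hgap1, by rw [hξc]; exact hgap2⟩
  -- IVT for L x - x - j
  have hφs : 0 ≤ L s - s - j := by linarith [hLs_mem.1]
  have hφt : L t - t - j ≤ 0 := by linarith [(hrange t ⟨hst, le_refl t⟩).2]
  have hmem0 : (0:ℝ) ∈ Icc ((fun x => L x - (x + (j:ℝ))) t) ((fun x => L x - (x + (j:ℝ))) s) := by
    constructor
    · show L t - (t + (j:ℝ)) ≤ 0; linarith
    · show 0 ≤ L s - (s + (j:ℝ)); linarith
  obtain ⟨x₀, hx₀, hx₀eq⟩ := intermediate_value_Icc' hst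
    ((hLc.sub (continuous_id.add continuous_const)).continuousOn :
      ContinuousOn (fun x => L x - (x + (j:ℝ))) (Icc s t)) hmem0
  refine ⟨pr x₀, ⟨x₀, hx₀, rfl⟩, ?_⟩
  rw [hcomm x₀]
  have : L x₀ = x₀ + j := by have := hx₀eq; simp at this; linarith
  rw [this]
  exact pr_add_int x₀ j


lemma add_int_of_add_one {Ψ : ℝ → ℝ} (h1 : ∀ x, Ψ (x + 1) = Ψ x + 1) (x : ℝ) (m : ℤ) :
    Ψ (x + m) = Ψ x + m := by
  induction m using Int.induction_on with
  | zero => simp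
  | succ n ih =>
      push_cast
      push_cast at ih
      rw [show x + ((n:ℝ) + 1) = (x + n) + 1 by ring, h1, ih]; ring
  | pred n ih =>
      push_cast
      push_cast at ih
      have h2 : x + (-(n:ℝ) - 1) + 1 = x + -(n:ℝ) := by ring
      have h3 := h1 (x + (-(n:ℝ) - 1))
      rw [h2] at h3
      linarith

/-- Descend a degree-one map to the circle. -/
def desc (Φ : ℝ → ℝ) (h1 : ∀ x, Φ (x + 1) = Φ x + 1) : 𝕊 → 𝕊 := fun q =>
  Quotient.liftOn' q (fun x => pr (Φ x)) (fun a b hab => by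
    have hab' : pr a = pr b := Quotient.sound' hab
    obtain ⟨n, rfl⟩ := pr_eq_iff.1 hab'
    show pr (Φ a) = pr (Φ (a + n))
    rw [add_int_of_add_one h1, pr_add_int])

lemma desc_pr (Φ : ℝ → ℝ) (h1 : ∀ x, Φ (x + 1) = Φ x + 1) (x : ℝ) :
    desc Φ h1 (pr x) = pr (Φ x) := rfl

lemma desc_continuous (Φ : ℝ → ℝ) (h1 : ∀ x, Φ (x + 1) = Φ x + 1) (hc : Continuous Φ) :
    Continuous (desc Φ h1) :=
  Continuous.quotient_liftOn' (pr_continuous.comp hc) _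

/-- main conjugacy lemma -/
lemma conj_rotation_of_semiconj {g : 𝕊 → 𝕊} {L : ℝ → ℝ}
    (hcomm : ∀ x, g (pr x) = pr (L x))
    {Φ : ℝ → ℝ} (hs : StrictMono Φ) (hc : Continuous Φ) (h1 : ∀ x, Φ (x + 1) = Φ x + 1)
    {c : ℝ} (hsc : ∀ x, Φ (L x) = Φ x + c) :
    ∃ (φ : 𝕊 ≃ₜ 𝕊) (d : 𝕊), ∀ x, φ (g (φ.symm x)) = d + x := by
  have hsurj : Function.Surjective Φ :=
    (CircleDeg1Lift.continuous_iff_surjective (⟨⟨Φ, hs.monotone⟩, h1⟩ : CircleDeg1Lift)).1 hc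
  set E : ℝ ≃o ℝ := StrictMono.orderIsoOfSurjective Φ hs hsurj with hEdef
  have hEappl : ∀ x, E x = Φ x := fun _ => rfl
  have hE : ∀ y, Φ (E.symm y) = y := fun y => by rw [← hEappl]; exact E.apply_symm_apply y
  have hEs1 : ∀ x, (E.symm : ℝ → ℝ) (x + 1) = E.symm x + 1 := by
    intro x
    apply hs.injective
    rw [hE, h1, hE]
  have li : Function.LeftInverse (desc (⇑E.symm) hEs1) (desc Φ h1) := by
    intro q
    obtain ⟨x, rfl⟩ := pr_surjective q
    show desc (⇑E.symm) hEs1 (pr (Φ x)) = pr x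
    rw [desc_pr]
    congr 1
    rw [← hEappl]
    exact E.symm_apply_apply x
  have ri : Function.RightInverse (desc (⇑E.symm) hEs1) (desc Φ h1) := by
    intro q
    obtain ⟨x, rfl⟩ := pr_surjective q
    show desc Φ h1 (pr (E.symm x)) = pr x
    rw [desc_pr, hE]
  let e : 𝕊 ≃ 𝕊 := ⟨desc Φ h1, desc (⇑E.symm) hEs1, li, ri⟩
  let φ : 𝕊 ≃ₜ 𝕊 := ⟨e, desc_continuous Φ h1 hc, desc_continuous (⇑E.symm) hEs1 (OrderIso.continuous E.symm)⟩
  refine ⟨φ, pr c, ?_⟩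
  intro q
  obtain ⟨y, rfl⟩ := pr_surjective q
  have h1' : φ.symm (pr y) = pr (E.symm y) := rfl
  have h2' : φ (pr (L (E.symm y))) = pr (Φ (L (E.symm y))) := rfl
  rw [h1', hcomm, h2', hsc, hE]
  show pr (y + c) = pr c + pr y
  unfold pr
  rw [← AddCircle.coe_add]
  congr 1
  ring


/-- transport of one sided limits of a monotone map under a strictly monotone
continuous map with `F ∘ M = F + c`. -/
lemma rightLim_comp_eq {F M : ℝ → ℝ} (hFm : Monotone F) (hMc : Continuous M)
    (hMs : StrictMono M) {c : ℝ} (hc : ∀ x, F (M x) = F x + c) (x : ℝ) :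
    rightLim F (M x) = rightLim F x + c := by
  have T1 : Tendsto M (nhdsWithin x (Ioi x)) (nhdsWithin (M x) (Ioi (M x))) := by
    rw [tendsto_nhdsWithin_iff]
    constructor
    · exact (hMc.tendsto x).mono_left nhdsWithin_le_nhds
    · exact eventually_nhdsWithin_of_forall (fun y hy => hMs hy)
  have hne : nhdsWithin x (Ioi x) ≠ ⊥ := (nhdsGT_neBot x).ne
  have A1 : rightLim (F ∘ M) x = rightLim F (M x) :=
    rightLim_eq_of_tendsto ((hFm.tendsto_rightLim (M x)).comp T1)
  have A2 : rightLim (F ∘ M) x = rightLim F x + c := by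
    apply rightLim_eq_of_tendsto
    have : (F ∘ M) = fun y => F y + c := funext hc
    rw [this]
    exact (hFm.tendsto_rightLim x).add tendsto_const_nhds
  rw [← A1, A2]

lemma leftLim_comp_eq {F M : ℝ → ℝ} (hFm : Monotone F) (hMc : Continuous M)
    (hMs : StrictMono M) {c : ℝ} (hc : ∀ x, F (M x) = F x + c) (x : ℝ) :
    leftLim F (M x) = leftLim F x + c := by
  have T1 : Tendsto M (nhdsWithin x (Iio x)) (nhdsWithin (M x) (Iio (M x))) := by
    rw [tendsto_nhdsWithin_iff]
    constructor
    · exact (hMc.tendsto x).mono_left nhdsWithin_le_nhds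
    · exact eventually_nhdsWithin_of_forall (fun y hy => hMs hy)
  have hne : nhdsWithin x (Iio x) ≠ ⊥ := (nhdsLT_neBot x).ne
  have A1 : leftLim (F ∘ M) x = leftLim F (M x) :=
    leftLim_eq_of_tendsto ((hFm.tendsto_leftLim (M x)).comp T1)
  have A2 : leftLim (F ∘ M) x = leftLim F x + c := by
    apply leftLim_eq_of_tendsto
    have : (F ∘ M) = fun y => F y + c := funext hc
    rw [this]
    exact (hFm.tendsto_leftLim x).add tendsto_const_nhds
  rw [← A1, A2]

lemma jump_comp_eq {F M : ℝ → ℝ} (hFm : Monotone F) (hMc : Continuous M)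
    (hMs : StrictMono M) {c : ℝ} (hc : ∀ x, F (M x) = F x + c) (x : ℝ) :
    rightLim F (M x) - leftLim F (M x) = rightLim F x - leftLim F x := by
  rw [rightLim_comp_eq hFm hMc hMs hc, leftLim_comp_eq hFm hMc hMs hc]
  ring

/-- a set of reals whose `g`-values are pairwise `c₀`-separated inside a bounded
interval is finite -/
lemma finite_of_separated {J : Set ℝ} {g : ℝ → ℝ} {c₀ lo hi : ℝ} (hc₀ : 0 < c₀)
    (hsep : ∀ x ∈ J, ∀ y ∈ J, x < y → g x + c₀ ≤ g y)
    (hlo : ∀ x ∈ J, lo ≤ g x) (hhi : ∀ x ∈ J, g x ≤ hi) : J.Finite := by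
  have key : ∀ x ∈ J, ∀ y ∈ J, x < y → ⌊g x / c₀⌋ < ⌊g y / c₀⌋ := by
    intro x hx y hy h
    have h1 := hsep x hx y hy h
    have h2 : (g x + c₀)/c₀ ≤ g y / c₀ := by gcongr
    have h3 : (g x + c₀)/c₀ = g x / c₀ + 1 := by
      field_simp
    rw [h3] at h2
    calc ⌊g x / c₀⌋ < ⌊g x / c₀⌋ + 1 := lt_add_one _
    _ = ⌊g x / c₀ + 1⌋ := (Int.floor_add_one _).symm
    _ ≤ ⌊g y / c₀⌋ := Int.floor_le_floor h2
  have hinj : InjOn (fun x => ⌊g x / c₀⌋) J := by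
    intro x hx y hy hxy
    by_contra hne
    rcases lt_or_gt_of_ne hne with h | h
    · exact absurd hxy (ne_of_lt (key x hx y hy h))
    · exact absurd hxy.symm (ne_of_lt (key y hy x hx h))
  have himg : (fun x => ⌊g x / c₀⌋) '' J ⊆ Icc ⌊lo / c₀⌋ ⌊hi / c₀⌋ := by
    rintro _ ⟨x, hx, rfl⟩
    constructor
    · exact Int.floor_le_floor (by gcongr; exact hlo x hx)
    · exact Int.floor_le_floor (by gcongr; exact hhi x hx)
  exact Set.Finite.of_finite_image ((Set.finite_Icc _ _).subset himg) hinj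


lemma iter_add_one {L : ℝ → ℝ} (h1 : ∀ x, L (x+1) = L x + 1) (m : ℕ) (x : ℝ) :
    L^[m] (x+1) = L^[m] x + 1 := by
  induction m generalizing x with
  | zero => rfl
  | succ m ih => rw [Function.iterate_succ_apply, Function.iterate_succ_apply, h1, ih]

section words
variable {k : ℕ} (f : Fin k → (𝕊 ≃ₜ 𝕊)) (G : Fin k → ℝ → ℝ)

/-- hypotheses on the chosen lifts -/
def GoodLifts : Prop :=
  ∀ i, StrictMono (G i) ∧ Continuous (G i) ∧ (∀ x, G i (x+1) = G i x + 1) ∧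
    ∀ x : ℝ, f i (pr x) = pr (G i x)

/-- lift of a word -/
def wl (l : List (Fin k)) : ℝ → ℝ := fun x => l.foldl (fun y i => G i y) x

lemma wl_nil (x : ℝ) : wl G [] x = x := rfl

lemma wl_cons (i : Fin k) (l : List (Fin k)) (x : ℝ) : wl G (i :: l) x = wl G l (G i x) := rfl

lemma wl_append (l₁ l₂ : List (Fin k)) (x : ℝ) : wl G (l₁ ++ l₂) x = wl G l₂ (wl G l₁ x) :=
  List.foldl_append

lemma listComp_cons {X : Type*} (g : Fin k → X → X) (i : Fin k) (l : List (Fin k)) (x : X) :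
    listComp g (i :: l) x = listComp g l (g i x) := rfl

lemma listComp_append {X : Type*} (g : Fin k → X → X) (l₁ l₂ : List (Fin k)) (x : X) :
    listComp g (l₁ ++ l₂) x = listComp g l₂ (listComp g l₁ x) := List.foldl_append

variable {f G}

lemma wl_strictMono (hG : GoodLifts f G) (l : List (Fin k)) : StrictMono (wl G l) := by
  induction l with
  | nil => exact fun a b h => h
  | cons i l ih => exact fun a b h => ih ((hG i).1 h)

lemma wl_continuous (hG : GoodLifts f G) (l : List (Fin k)) : Continuous (wl G l) := by
  induction l with
  | nil => exact continuous_id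
  | cons i l ih => exact ih.comp (hG i).2.1

lemma wl_add_one (hG : GoodLifts f G) (l : List (Fin k)) (x : ℝ) :
    wl G l (x + 1) = wl G l x + 1 := by
  induction l generalizing x with
  | nil => rfl
  | cons i l ih => rw [wl_cons, wl_cons, (hG i).2.2.1, ih]

lemma wl_comm (hG : GoodLifts f G) (l : List (Fin k)) (x : ℝ) :
    listComp (fun i => ⇑(f i)) l (pr x) = pr (wl G l x) := by
  induction l generalizing x with
  | nil => rfl
  | cons i l ih => rw [listComp_cons, wl_cons, (hG i).2.2.2, ih]

lemma listComp_continuous (l : List (Fin k)) : Continuous (listComp (fun i => ⇑(f i)) l) := by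
  induction l with
  | nil => exact continuous_id
  | cons i l ih =>
      have : listComp (fun i => ⇑(f i)) (i :: l) =
          (listComp (fun i => ⇑(f i)) l) ∘ ⇑(f i) := rfl
      rw [this]
      exact ih.comp (f i).continuous

lemma listComp_rev_inverse (u : List (Fin k)) (x : 𝕊) :
    listComp (fun i => ⇑(f i)) u.reverse (listComp (fun i => ⇑(f i).symm) u x) = x := by
  induction u generalizing x with
  | nil => rfl
  | cons i u ih =>
      rw [listComp_cons, List.reverse_cons, listComp_append]
      rw [ih ((f i).symm x)]
      show f i ((f i).symm x) = x
      exact (f i).apply_symm_apply x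

/-- the `CircleDeg1Lift` bundling of a word lift -/
def wlD (hG : GoodLifts f G) (l : List (Fin k)) : CircleDeg1Lift :=
  ⟨⟨wl G l, (wl_strictMono hG l).monotone⟩, wl_add_one hG l⟩

lemma wlD_coe (hG : GoodLifts f G) (l : List (Fin k)) : ⇑(wlD hG l) = wl G l := rfl

lemma wlD_isUnit (hG : GoodLifts f G) (l : List (Fin k)) : IsUnit (wlD hG l) := by
  rw [CircleDeg1Lift.isUnit_iff_bijective]
  exact ⟨(wl_strictMono hG l).injective,
    (CircleDeg1Lift.continuous_iff_surjective _).1 (wl_continuous hG l)⟩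

/-- repeated word -/
def lrep (l : List (Fin k)) : ℕ → List (Fin k)
  | 0 => []
  | (n+1) => lrep l n ++ l

lemma wl_lrep (hG : GoodLifts f G) (l : List (Fin k)) (n : ℕ) (x : ℝ) :
    wl G (lrep l n) x = (wl G l)^[n] x := by
  induction n generalizing x with
  | zero => rfl
  | succ n ih =>
      rw [lrep, wl_append, Function.iterate_succ_apply', ← ih]

lemma lrep_ne_nil {l : List (Fin k)} (hl : l ≠ []) {n : ℕ} (hn : 0 < n) : lrep l n ≠ [] := by
  cases n with
  | zero => omega
  | succ n =>
      show lrep l n ++ l ≠ []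
      simp [hl]

end words

section density
variable {k : ℕ} {f : Fin k → ((AddCircle (1:ℝ)) ≃ₜ (AddCircle (1:ℝ)))} {G : Fin k → ℝ → ℝ}

/-- Part D: density of periodic points from a contracted arc plus forward and
backward minimality. -/
lemma dense_of_contraction (hG : GoodLifts f G)
    (hfwd : ∀ x : AddCircle (1 : ℝ),
      Dense {y | ∃ l : List (Fin k), l ≠ [] ∧ y = listComp (fun i => ⇑(f i)) l x})
    (hbwd : ∀ x : AddCircle (1 : ℝ),
      Dense {y | ∃ l : List (Fin k), l ≠ [] ∧ y = listComp (fun i => ⇑(f i).symm) l x})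
    {a b : ℝ} (hab : a < b)
    (hcontr : ∀ δ > (0:ℝ), ∃ w : List (Fin k), w ≠ [] ∧ wl G w b - wl G w a < δ) :
    Dense {q : AddCircle (1 : ℝ) |
      ∃ l : List (Fin k), l ≠ [] ∧ listComp (fun i => ⇑(f i)) l q = q} := by
  rw [dense_iff_inter_open]
  intro U hU ⟨u, hu⟩
  obtain ⟨ε₀, hε₀, hballU⟩ := Metric.mem_nhds_iff.1 (hU.mem_nhds hu)
  set ε : ℝ := min ε₀ (1/2) with hεdef
  have hε : 0 < ε := lt_min hε₀ (by norm_num)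
  have hεU : Metric.ball u ε ⊆ U := fun z hz => hballU (Metric.ball_subset_ball (min_le_left _ _) hz)
  -- backward step
  set a₀ : AddCircle (1:ℝ) := pr ((a+b)/2) with ha₀def
  obtain ⟨p', ⟨u₁, hu₁ne, hp'eq⟩, hp'ball⟩ :=
    (hbwd a₀).exists_mem_open Metric.isOpen_ball ⟨u, Metric.mem_ball_self (by positivity : 0 < ε/2)⟩
  set v : AddCircle (1:ℝ) → AddCircle (1:ℝ) := listComp (fun i => ⇑(f i)) u₁.reverse with hvdef
  have hvp' : v p' = a₀ := by rw [hp'eq]; exact listComp_rev_inverse u₁ a₀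
  -- v maps a neighbourhood of p' into the open arc (a,b)
  set W : Set (AddCircle (1:ℝ)) := pr '' Ioo a b with hWdef
  have hWopen : IsOpen W := by
    have : IsOpenMap (pr : ℝ → AddCircle (1:ℝ)) := QuotientAddGroup.isOpenMap_coe
    exact this _ isOpen_Ioo
  have ha₀W : a₀ ∈ W := ⟨(a+b)/2, ⟨by linarith, by linarith⟩, rfl⟩
  have hvW : v ⁻¹' W ∈ nhds p' := by
    refine (listComp_continuous (f := f) u₁.reverse).continuousAt.preimage_mem_nhds ?_
    show W ∈ nhds (v p')
    rw [hvp']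
    exact hWopen.mem_nhds ha₀W
  obtain ⟨ρ'', hρ''pos, hρ''sub⟩ := Metric.mem_nhds_iff.1 hvW
  set ρ' : ℝ := min (ρ''/2) (min (ε/4) (1/8)) with hρ'def
  have hρ' : 0 < ρ' := by
    apply lt_min (by positivity)
    exact lt_min (by positivity) (by norm_num)
  have hρ'ε : ρ' ≤ ε/4 := le_trans (min_le_right _ _) (min_le_left _ _)
  have hρ'8 : ρ' ≤ 1/8 := le_trans (min_le_right _ _) (min_le_right _ _)
  set I : Set (AddCircle (1:ℝ)) := Metric.closedBall p' ρ' with hIdef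
  have hIW : ∀ q ∈ I, v q ∈ W := by
    intro q hq
    apply hρ''sub
    have : dist q p' ≤ ρ' := Metric.mem_closedBall.1 hq
    exact Metric.mem_ball.2 (lt_of_le_of_lt this (lt_of_le_of_lt (min_le_left _ _) (by linarith)))
  have hIU : I ⊆ U := by
    intro z hz
    apply hεU
    have h1 : dist z p' ≤ ρ' := Metric.mem_closedBall.1 hz
    have h2 : dist p' u < ε/2 := Metric.mem_ball.1 hp'ball
    exact Metric.mem_ball.2 (lt_of_le_of_lt (dist_triangle z p' u) (by linarith))
  -- uniform forward step
  have hfor : ∀ z : AddCircle (1:ℝ), ∃ w : List (Fin k), w ≠ [] ∧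
      listComp (fun i => ⇑(f i)) w z ∈ Metric.ball p' ρ' := by
    intro z
    obtain ⟨y, ⟨w, hwne, hweq⟩, hy⟩ := (hfwd z).exists_mem_open Metric.isOpen_ball
      ⟨p', Metric.mem_ball_self hρ'⟩
    exact ⟨w, hwne, hweq ▸ hy⟩
  choose wz hwzne hwzmem using hfor
  set V : AddCircle (1:ℝ) → Set (AddCircle (1:ℝ)) :=
    fun z => (listComp (fun i => ⇑(f i)) (wz z)) ⁻¹' (Metric.ball p' ρ') with hVdef
  have hVopen : ∀ z, IsOpen (V z) := fun z =>
    (Metric.isOpen_ball).preimage (listComp_continuous _)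
  have hVmem : ∀ z, z ∈ V z := fun z => hwzmem z
  have hVcover : (univ : Set (AddCircle (1:ℝ))) ⊆ ⋃ z, V z :=
    fun z _ => mem_iUnion.2 ⟨z, hVmem z⟩
  obtain ⟨Vu, hVu, hleb⟩ := lebesgue_number_lemma isCompact_univ hVopen hVcover
  obtain ⟨δ, hδpos, hδ⟩ := Metric.mem_uniformity_dist.1 hVu
  -- contraction step
  obtain ⟨w₂, hw₂ne, hw₂len⟩ := hcontr δ hδpos
  set L₂ : ℝ → ℝ := wl G w₂ with hL₂def
  set zstar : AddCircle (1:ℝ) := pr (L₂ a) with hzstardef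
  obtain ⟨z₀, hz₀⟩ := hleb zstar (mem_univ _)
  have hball_sub : Metric.ball zstar δ ⊆ V z₀ := by
    intro y hy
    exact hz₀ (hδ (Metric.mem_ball'.1 hy))
  -- the total word
  set wt : List (Fin k) := u₁.reverse ++ w₂ ++ wz z₀ with hwtdef
  have hwtne : wt ≠ [] := by
    have : u₁.reverse ≠ [] := fun h => hu₁ne (by simpa using congrArg List.reverse h)
    rw [hwtdef]
    intro h
    rcases List.append_eq_nil_iff.1 h with ⟨h1, -⟩
    rcases List.append_eq_nil_iff.1 h1 with ⟨h2, -⟩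
    exact this h2
  have hmapsI : ∀ q ∈ I, listComp (fun i => ⇑(f i)) wt q ∈ Metric.ball p' ρ' := by
    intro q hq
    have hexp : listComp (fun i => ⇑(f i)) wt q =
        listComp (fun i => ⇑(f i)) (wz z₀) (listComp (fun i => ⇑(f i)) w₂ (v q)) := by
      rw [hwtdef, listComp_append, listComp_append]
    rw [hexp]
    obtain ⟨x₂, hx₂, hx₂eq⟩ := hIW q hq
    apply hball_sub
    rw [← hx₂eq, wl_comm hG]
    refine Metric.mem_ball.2 (lt_of_le_of_lt (dist_pr_le _ _) ?_)
    have h1 : L₂ x₂ ≤ L₂ b := (wl_strictMono hG w₂).monotone hx₂.2.le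
    have h2 : L₂ a ≤ L₂ x₂ := (wl_strictMono hG w₂).monotone hx₂.1.le
    calc |L₂ x₂ - L₂ a| ≤ L₂ b - L₂ a := abs_le.2 ⟨by linarith, by linarith⟩
    _ < δ := hw₂len
  -- apply the fixed point lemma on the arc I
  obtain ⟨p₀, hp₀⟩ := pr_surjective p'
  have harc : I = pr '' Icc (p₀ - ρ') (p₀ + ρ') := by
    rw [hIdef, ← hp₀]; exact closedBall_eq_arc hρ'
  have hmaps' : ∀ x ∈ Icc (p₀ - ρ') (p₀ + ρ'),
      listComp (fun i => ⇑(f i)) wt (pr x) ∈ pr '' Icc (p₀ - ρ') (p₀ + ρ') := by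
    intro x hx
    rw [← harc]
    refine Metric.ball_subset_closedBall (hmapsI (pr x) ?_)
    rw [harc]; exact ⟨x, hx, rfl⟩
  obtain ⟨q, hqI, hqfix⟩ := fixed_point_of_mapsTo (L := wl G wt)
    (wl_strictMono hG wt).monotone (wl_continuous hG wt)
    (fun x => wl_comm hG wt x) (by linarith : p₀ - ρ' ≤ p₀ + ρ')
    (by linarith : (p₀ + ρ') - (p₀ - ρ') < 1) hmaps'
  refine ⟨q, ?_, ?_⟩
  · exact hIU (harc ▸ hqI)
  · exact ⟨wt, hwtne, hqfix⟩

end density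

section caseone
variable {k : ℕ} {f : Fin k → ((AddCircle (1:ℝ)) ≃ₜ (AddCircle (1:ℝ)))} {G : Fin k → ℝ → ℝ}

lemma iter_comm (hG : GoodLifts f G) (l : List (Fin k)) (m : ℕ) (x : ℝ) :
    (listComp (fun i => ⇑(f i)) l)^[m] (pr x) = pr ((wl G l)^[m] x) := by
  induction m generalizing x with
  | zero => rfl
  | succ m ih =>
      rw [Function.iterate_succ_apply, Function.iterate_succ_apply, wl_comm hG, ih]

/-- Case 1: some iterate of the word `l` has a lifted fixed point. -/
lemma caseone (hG : GoodLifts f G) {l : List (Fin k)} (hl : l ≠ []) {n : ℕ} (hn : 0 < n)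
    {x₀ : ℝ} {p : ℤ} (hper : (wl G l)^[n] x₀ = x₀ + p) :
    (∃ (φ : (AddCircle (1:ℝ)) ≃ₜ (AddCircle (1:ℝ))) (d : AddCircle (1:ℝ)),
        ∀ x, φ (listComp (fun i => ⇑(f i)) l (φ.symm x)) = d + x) ∨
    (∃ a b : ℝ, a < b ∧ ∀ δ > (0:ℝ), ∃ w : List (Fin k), w ≠ [] ∧ wl G w b - wl G w a < δ) := by
  set H : ℝ → ℝ := wl G l with hHdef
  have hHs : StrictMono H := wl_strictMono hG l
  have hHc : Continuous H := wl_continuous hG l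
  have hH1 : ∀ x, H (x+1) = H x + 1 := wl_add_one hG l
  have hHits : ∀ m : ℕ, StrictMono (H^[m]) := fun m => hHs.iterate m
  have hHitc : ∀ m : ℕ, Continuous (H^[m]) := fun m => hHc.iterate m
  have hHit1 : ∀ (m : ℕ) x, H^[m] (x+1) = H^[m] x + 1 := fun m x => iter_add_one hH1 m x
  have hHint : ∀ (m : ℕ) (x : ℝ) (j : ℤ), H^[m] (x + j) = H^[m] x + j :=
    fun m x j => add_int_of_add_one (hHit1 m) x j
  by_cases hid : ∀ x, H^[n] x = x + p
  · -- averaging: conjugate to a rotation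
    left
    set Φ : ℝ → ℝ := fun x => (1/(n:ℝ)) * ∑ j ∈ Finset.range n, H^[j] x with hΦdef
    have hnpos : (0:ℝ) < (n:ℝ) := by exact_mod_cast hn
    have hΦs : StrictMono Φ := by
      intro x y hxy
      apply mul_lt_mul_of_pos_left _ (by positivity)
      exact Finset.sum_lt_sum_of_nonempty (Finset.nonempty_range_iff.2 hn.ne')
        (fun j _ => hHits j hxy)
    have hΦc : Continuous Φ := by
      apply continuous_const.mul
      exact continuous_finset_sum _ (fun j _ => hHitc j)
    have hΦ1 : ∀ x, Φ (x+1) = Φ x + 1 := by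
      intro x
      rw [hΦdef]
      simp only []
      rw [show ∑ j ∈ Finset.range n, H^[j] (x+1) = ∑ j ∈ Finset.range n, (H^[j] x + 1) from
        Finset.sum_congr rfl (fun j _ => hHit1 j x)]
      rw [Finset.sum_add_distrib, Finset.sum_const, Finset.card_range]
      field_simp
      simp
    have hΦsc : ∀ x, Φ (H x) = Φ x + (p:ℝ)/(n:ℝ) := by
      intro x
      have e1 : ∑ j ∈ Finset.range n, H^[j] (H x) = ∑ j ∈ Finset.range n, H^[j+1] x :=
        Finset.sum_congr rfl (fun j _ => by rw [← Function.iterate_succ_apply])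
      have e2 : ∑ j ∈ Finset.range (n+1), H^[j] x
          = (∑ j ∈ Finset.range n, H^[j+1] x) + H^[0] x := Finset.sum_range_succ' _ n
      have e3 : ∑ j ∈ Finset.range (n+1), H^[j] x
          = (∑ j ∈ Finset.range n, H^[j] x) + H^[n] x := Finset.sum_range_succ _ n
      have e4 : ∑ j ∈ Finset.range n, H^[j+1] x
          = (∑ j ∈ Finset.range n, H^[j] x) + p := by
        have := e2.symm.trans e3
        rw [hid x] at this
        simp only [Function.iterate_zero_apply] at this
        linarith
      show (1/(n:ℝ)) * ∑ j ∈ Finset.range n, H^[j] (H x) = _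
      rw [e1, e4]
      ring
    exact conj_rotation_of_semiconj (fun x => wl_comm hG l x) hΦs hΦc hΦ1 hΦsc
  · -- there is an interval of non fixed points: contraction
    right
    push_neg at hid
    obtain ⟨y, hy⟩ := hid
    set G₀ : ℝ → ℝ := fun x => H^[n] x - p with hG₀def
    have hG₀s : StrictMono G₀ := fun u v huv => by
      simp only [hG₀def]; exact sub_lt_sub_right (hHits n huv) _
    have hG₀c : Continuous G₀ := (hHitc n).sub continuous_const
    have hG₀x₀ : G₀ x₀ = x₀ := by simp only [hG₀def]; rw [hper]; ring
    have hG₀int : ∀ (x : ℝ) (j : ℤ), G₀ (x + j) = G₀ x + j := by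
      intro x j
      simp only [hG₀def]
      rw [hHint n x j]; ring
    have hG₀1 : G₀ (x₀ + 1) = x₀ + 1 := by
      have := hG₀int x₀ (1:ℤ)
      push_cast at this
      rw [this, hG₀x₀]
    have hyne : G₀ y ≠ y := by
      simp only [hG₀def]
      intro hcon
      apply hy
      have : H^[n] y - (p:ℝ) = y := hcon
      linarith
    -- normalize y into [x₀, x₀+1)
    set y' : ℝ := y - ⌊y - x₀⌋ with hy'def
    have hy'ne : G₀ y' ≠ y' := by
      have : G₀ (y' + ⌊y - x₀⌋) = G₀ y' + ⌊y - x₀⌋ := hG₀int y' _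
      rw [show y' + (⌊y - x₀⌋ : ℝ) = y by rw [hy'def]; ring] at this
      intro hcon
      apply hyne
      rw [this, hcon]
      rw [hy'def]; ring
    have hy'mem : y' ∈ Ico x₀ (x₀ + 1) := by
      constructor
      · have := Int.floor_le (y - x₀); rw [hy'def]; linarith
      · have := Int.lt_floor_add_one (y - x₀); rw [hy'def]; linarith
    have hSclosed : IsClosed {x : ℝ | G₀ x = x} := isClosed_eq hG₀c continuous_id
    -- α and β
    set A : Set ℝ := {x | G₀ x = x} ∩ Icc x₀ y' with hAdef
    set B : Set ℝ := {x | G₀ x = x} ∩ Icc y' (x₀ + 1) with hBdef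
    have hAne : A.Nonempty := ⟨x₀, hG₀x₀, le_refl _, hy'mem.1⟩
    have hBne : B.Nonempty := ⟨x₀ + 1, hG₀1, hy'mem.2.le, le_refl _⟩
    have hAclosed : IsClosed A := hSclosed.inter isClosed_Icc
    have hBclosed : IsClosed B := hSclosed.inter isClosed_Icc
    have hAbdd : BddAbove A := ⟨y', fun x hx => hx.2.2⟩
    have hBbdd : BddBelow B := ⟨y', fun x hx => hx.2.1⟩
    set α : ℝ := sSup A with hαdef
    set β : ℝ := sInf B with hβdef
    have hαA : α ∈ A := hAclosed.csSup_mem hAne hAbdd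
    have hβB : β ∈ B := hBclosed.csInf_mem hBne hBbdd
    have hαy' : α < y' := lt_of_le_of_ne hαA.2.2 (fun h => hy'ne (h ▸ hαA.1))
    have hy'β : y' < β := lt_of_le_of_ne hβB.2.1 (fun h => hy'ne (by rw [h]; exact hβB.1))
    have hx₀α : x₀ ≤ α := hαA.2.1
    have hβx₁ : β ≤ x₀ + 1 := hβB.2.2
    have hαβ : α < β := lt_trans hαy' hy'β
    have hG₀α : G₀ α = α := hαA.1
    have hG₀β : G₀ β = β := hβB.1
    -- no fixed points in the open interval
    have hnofix : ∀ x ∈ Ioo α β, G₀ x ≠ x := by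
      intro x hx hfix
      rcases le_or_gt x y' with h | h
      · have : x ∈ A := ⟨hfix, le_trans hx₀α hx.1.le, h⟩
        exact absurd (le_csSup hAbdd this) (not_le.2 hx.1)
      · have : x ∈ B := ⟨hfix, h.le, le_trans hx.2.le hβx₁⟩
        exact absurd (csInf_le hBbdd this) (not_le.2 hx.2)
    have hy'Ioo : y' ∈ Ioo α β := ⟨hαy', hy'β⟩
    -- sign dichotomy
    have hsign : (∀ x ∈ Ioo α β, x < G₀ x) ∨ (∀ x ∈ Ioo α β, G₀ x < x) := by
      rcases lt_or_gt_of_ne hy'ne.symm with hpos | hneg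
      · left
        intro x hx
        rcases lt_or_gt_of_ne (hnofix x hx) with h | h
        -- h : G₀ x < x, but G₀ y' > y' : IVT gives a fixed point between
        · exfalso
          rcases le_or_gt x y' with hxy | hxy
          · have hIcc : Icc x y' ⊆ Ioo α β := fun z hz => ⟨lt_of_lt_of_le hx.1 hz.1,
              lt_of_le_of_lt hz.2 hy'β⟩
            have h0 : (0:ℝ) ∈ Icc (G₀ x - x) (G₀ y' - y') := ⟨by linarith, by linarith⟩
            obtain ⟨ξ, hξ, hξ0⟩ := intermediate_value_Icc hxy
              ((hG₀c.sub continuous_id).continuousOn : ContinuousOn (fun z => G₀ z - z) _) h0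
            have hξ0' : G₀ ξ - ξ = 0 := hξ0
            exact hnofix ξ (hIcc hξ) (by linarith)
          · have hIcc : Icc y' x ⊆ Ioo α β := fun z hz => ⟨lt_of_lt_of_le hαy' hz.1,
              lt_of_le_of_lt hz.2 hx.2⟩
            have h0 : (0:ℝ) ∈ Icc (G₀ x - x) (G₀ y' - y') := ⟨by linarith, by linarith⟩
            obtain ⟨ξ, hξ, hξ0⟩ := intermediate_value_Icc' hxy.le
              ((hG₀c.sub continuous_id).continuousOn : ContinuousOn (fun z => G₀ z - z) _) h0
            have hξ0' : G₀ ξ - ξ = 0 := hξ0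
            exact hnofix ξ (hIcc hξ) (by linarith)
        · exact h
      · right
        intro x hx
        rcases lt_or_gt_of_ne (hnofix x hx) with h | h
        · exact h
        · exfalso
          rcases le_or_gt x y' with hxy | hxy
          · have hIcc : Icc x y' ⊆ Ioo α β := fun z hz => ⟨lt_of_lt_of_le hx.1 hz.1,
              lt_of_le_of_lt hz.2 hy'β⟩
            have h0 : (0:ℝ) ∈ Icc (G₀ y' - y') (G₀ x - x) := ⟨by linarith, by linarith⟩
            obtain ⟨ξ, hξ, hξ0⟩ := intermediate_value_Icc' hxy
              ((hG₀c.sub continuous_id).continuousOn : ContinuousOn (fun z => G₀ z - z) _) h0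
            have hξ0' : G₀ ξ - ξ = 0 := hξ0
            exact hnofix ξ (hIcc hξ) (by linarith)
          · have hIcc : Icc y' x ⊆ Ioo α β := fun z hz => ⟨lt_of_lt_of_le hαy' hz.1,
              lt_of_le_of_lt hz.2 hx.2⟩
            have h0 : (0:ℝ) ∈ Icc (G₀ y' - y') (G₀ x - x) := ⟨by linarith, by linarith⟩
            obtain ⟨ξ, hξ, hξ0⟩ := intermediate_value_Icc hxy.le
              ((hG₀c.sub continuous_id).continuousOn : ContinuousOn (fun z => G₀ z - z) _) h0
            have hξ0' : G₀ ξ - ξ = 0 := hξ0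
            exact hnofix ξ (hIcc hξ) (by linarith)
    -- choose the subinterval
    set c : ℝ := α + (β - α)/3 with hcdef
    set d : ℝ := α + 2*(β - α)/3 with hddef
    have hcd : c < d := by rw [hcdef, hddef]; linarith
    have hcIoo : c ∈ Ioo α β := ⟨by rw [hcdef]; linarith, by rw [hcdef]; linarith⟩
    have hdIoo : d ∈ Ioo α β := ⟨by rw [hddef]; linarith, by rw [hddef]; linarith⟩
    refine ⟨c, d, hcd, ?_⟩
    intro δ hδ
    -- relation between iterates of H and G₀
    have hHG₀ : ∀ (j : ℕ) (x : ℝ), H^[n*j] x = G₀^[j] x + (j:ℝ) * p := by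
      intro j
      induction j with
      | zero => intro x; simp
      | succ j ih =>
          intro x
          have : n * (j+1) = n + n * j := by ring
          rw [this, Function.iterate_add_apply, ih]
          have e1 : H^[n] (G₀^[j] x + (j:ℝ)*p) = H^[n] (G₀^[j] x) + (j:ℝ)*p := by
            have := hHint n (G₀^[j] x) ((j:ℤ) * p)
            push_cast at this
            exact this
          rw [e1]
          have e2 : H^[n] (G₀^[j] x) = G₀ (G₀^[j] x) + p := by
            simp only [hG₀def]; ring
          rw [e2, ← Function.iterate_succ_apply' G₀]
          push_cast
          ring
    -- convergence of both endpoint orbits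
    have main : ∃ j : ℕ, 0 < j ∧ G₀^[j] d - G₀^[j] c < δ := by
      rcases hsign with hpos | hneg
      · -- increasing to β
        have hinv : ∀ x ∈ Ioo α β, G₀ x ∈ Ioo α β := by
          intro x hx
          exact ⟨lt_trans hx.1 (hpos x hx), by
            have := hG₀s hx.2
            rw [hG₀β] at this
            exact this⟩
        have hseq : ∀ x ∈ Ioo α β, ∀ j : ℕ, G₀^[j] x ∈ Ioo α β := by
          intro x hx j
          induction j with
          | zero => exact hx
          | succ j ih => rw [Function.iterate_succ_apply']; exact hinv _ ih
        have hlim : ∀ x ∈ Ioo α β, Tendsto (fun j => G₀^[j] x) atTop (nhds β) := by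
          intro x hx
          have hmono : Monotone (fun j => G₀^[j] x) := monotone_nat_of_le_succ (fun j => by
            rw [Function.iterate_succ_apply']
            exact (hpos _ (hseq x hx j)).le)
          have hbdd : BddAbove (range (fun j => G₀^[j] x)) :=
            ⟨β, by rintro _ ⟨j, rfl⟩; exact (hseq x hx j).2.le⟩
          have htend := tendsto_atTop_ciSup hmono hbdd
          set ℓ : ℝ := ⨆ j, G₀^[j] x with hℓdef
          have hℓfix : G₀ ℓ = ℓ := by
            have h1 : Tendsto (fun j => G₀^[j+1] x) atTop (nhds ℓ) :=
              htend.comp (tendsto_add_atTop_nat 1)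
            have h2 : Tendsto (fun j => G₀ (G₀^[j] x)) atTop (nhds (G₀ ℓ)) :=
              (hG₀c.continuousAt.tendsto).comp htend
            have h3 : (fun j => G₀ (G₀^[j] x)) = (fun j => G₀^[j+1] x) := by
              funext j; rw [Function.iterate_succ_apply']
            rw [h3] at h2
            exact tendsto_nhds_unique h2 h1
          have hℓge : x ≤ ℓ := le_ciSup hbdd 0
          have hℓle : ℓ ≤ β := ciSup_le (fun j => (hseq x hx j).2.le)
          have hℓβ : ℓ = β := by
            by_contra hne
            exact hnofix ℓ ⟨lt_of_lt_of_le hx.1 hℓge, lt_of_le_of_ne hℓle hne⟩ hℓfix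
          rw [← hℓβ]
          exact htend
        have hdiff : Tendsto (fun j => G₀^[j] d - G₀^[j] c) atTop (nhds 0) := by
          have := (hlim d hdIoo).sub (hlim c hcIoo)
          simpa using this
        obtain ⟨j, hj0, hjδ⟩ := ((eventually_gt_atTop 0).and
          (hdiff.eventually (gt_mem_nhds hδ))).exists
        exact ⟨j, hj0, hjδ⟩
      · -- decreasing to α
        have hinv : ∀ x ∈ Ioo α β, G₀ x ∈ Ioo α β := by
          intro x hx
          refine ⟨?_, lt_trans (hneg x hx) hx.2⟩
          have := hG₀s hx.1
          rw [hG₀α] at this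
          exact this
        have hseq : ∀ x ∈ Ioo α β, ∀ j : ℕ, G₀^[j] x ∈ Ioo α β := by
          intro x hx j
          induction j with
          | zero => exact hx
          | succ j ih => rw [Function.iterate_succ_apply']; exact hinv _ ih
        have hlim : ∀ x ∈ Ioo α β, Tendsto (fun j => G₀^[j] x) atTop (nhds α) := by
          intro x hx
          have hmono : Antitone (fun j => G₀^[j] x) := antitone_nat_of_succ_le (fun j => by
            rw [Function.iterate_succ_apply']
            exact (hneg _ (hseq x hx j)).le)
          have hbdd : BddBelow (range (fun j => G₀^[j] x)) :=
            ⟨α, by rintro _ ⟨j, rfl⟩; exact (hseq x hx j).1.le⟩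
          have htend := tendsto_atTop_ciInf hmono hbdd
          set ℓ : ℝ := ⨅ j, G₀^[j] x with hℓdef
          have hℓfix : G₀ ℓ = ℓ := by
            have h1 : Tendsto (fun j => G₀^[j+1] x) atTop (nhds ℓ) :=
              htend.comp (tendsto_add_atTop_nat 1)
            have h2 : Tendsto (fun j => G₀ (G₀^[j] x)) atTop (nhds (G₀ ℓ)) :=
              (hG₀c.continuousAt.tendsto).comp htend
            have h3 : (fun j => G₀ (G₀^[j] x)) = (fun j => G₀^[j+1] x) := by
              funext j; rw [Function.iterate_succ_apply']
            rw [h3] at h2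
            exact tendsto_nhds_unique h2 h1
          have hℓle : ℓ ≤ x := ciInf_le hbdd 0
          have hℓge : α ≤ ℓ := le_ciInf (fun j => (hseq x hx j).1.le)
          have hℓα : ℓ = α := by
            by_contra hne
            exact hnofix ℓ ⟨lt_of_le_of_ne hℓge (Ne.symm hne), lt_of_le_of_lt hℓle hx.2⟩ hℓfix
          rw [← hℓα]
          exact htend
        have hdiff : Tendsto (fun j => G₀^[j] d - G₀^[j] c) atTop (nhds 0) := by
          have := (hlim d hdIoo).sub (hlim c hcIoo)
          simpa using this
        obtain ⟨j, hj0, hjδ⟩ := ((eventually_gt_atTop 0).and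
          (hdiff.eventually (gt_mem_nhds hδ))).exists
        exact ⟨j, hj0, hjδ⟩
    obtain ⟨j, hj, hjlt⟩ := main
    refine ⟨lrep l (n*j), lrep_ne_nil hl (by positivity), ?_⟩
    rw [wl_lrep hG, wl_lrep hG, hHG₀ j d, hHG₀ j c]
    linarith

end caseone

section casetwo
variable {k : ℕ} {f : Fin k → ((AddCircle (1:ℝ)) ≃ₜ (AddCircle (1:ℝ)))} {G : Fin k → ℝ → ℝ}

open MeasureTheory
open scoped ENNReal

/-- if the semiconjugacy `F` is constant on an interval and `τ` is irrational, the
interval is contracted by the iterates of the word. -/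
lemma flats_contraction (hG : GoodLifts f G) {l : List (Fin k)} (hl : l ≠ [])
    {F : CircleDeg1Lift} {τ : ℝ} (hsc : ∀ x, F (wl G l x) = F x + τ)
    (htau : ∀ r : ℚ, τ ≠ (r:ℝ)) {a b : ℝ} (hab : a < b) (hconst : F b ≤ F a) :
    ∀ δ > (0:ℝ), ∃ w : List (Fin k), w ≠ [] ∧ wl G w b - wl G w a < δ := by
  set H : ℝ → ℝ := wl G l with hHdef
  have hHs : StrictMono H := wl_strictMono hG l
  have hHc : Continuous H := wl_continuous hG l
  have hHitc : ∀ m : ℕ, Continuous (H^[m]) := fun m => hHc.iterate m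
  have hHitm : ∀ m : ℕ, Monotone (H^[m]) := fun m => (hHs.iterate m).monotone
  have hFicc : ∀ x ∈ Icc a b, F x = F a := fun x hx =>
    le_antisymm (le_trans (F.monotone hx.2) hconst) (F.monotone hx.1)
  have hFiter : ∀ (j : ℕ) (x : ℝ), F (H^[j] x) = F x + j * τ := by
    intro j
    induction j with
    | zero => intro x; simp
    | succ j ih =>
        intro x
        rw [Function.iterate_succ_apply', hsc, ih]
        push_cast
        ring
  have hconstj : ∀ (j : ℕ), ∀ y ∈ Icc (H^[j] a) (H^[j] b), F y = F a + j * τ := by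
    intro j y hy
    obtain ⟨z, hz, hzy⟩ := intermediate_value_Icc hab.le (hHitc j).continuousOn hy
    rw [← hzy, hFiter, hFicc z hz]
  set Sj : ℕ → Set (AddCircle (1:ℝ)) := fun j => pr '' Icc (H^[j] a) (H^[j] b) with hSjdef
  have hSne : ∀ j, (Sj j).Nonempty := fun j => ⟨pr (H^[j] a), H^[j] a,
    ⟨le_refl _, hHitm j hab.le⟩, rfl⟩
  have hdisj : ∀ i j : ℕ, i ≠ j → Disjoint (Sj i) (Sj j) := by
    intro i j hij
    rw [Set.disjoint_left]
    rintro q ⟨x, hx, rfl⟩ ⟨y, hy, hyq⟩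
    obtain ⟨m, hm⟩ := pr_eq_iff.1 hyq
    -- x = y + m
    have hFy : F y = F a + j * τ := hconstj j y hy
    have hFx : F x = F a + i * τ := hconstj i x hx
    have hFxy : F x = F y + m := by rw [hm]; exact F.map_add_int y m
    have hkey : ((i:ℝ) - j) * τ = m := by
      rw [hFy, hFx] at hFxy
      linarith
    have hne : ((i:ℝ) - (j:ℝ)) ≠ 0 := by
      intro h
      exact hij (by exact_mod_cast sub_eq_zero.1 h)
    apply htau ((m:ℚ) / ((i:ℚ) - (j:ℚ)))
    have : τ = (m:ℝ) / ((i:ℝ) - (j:ℝ)) := by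
      field_simp at hkey ⊢
      linarith
    rw [this]
    push_cast
    ring
  have hmeas : ∀ j, MeasurableSet (Sj j) :=
    fun j => (isCompact_Icc.image pr_continuous).isClosed.measurableSet
  intro δ hδ
  set δ₁ : ℝ := min δ (1/2) with hδ₁def
  have hδ₁pos : 0 < δ₁ := lt_min hδ (by norm_num)
  have hδ₁le : δ₁ ≤ δ := min_le_left _ _
  by_contra hcon
  push_neg at hcon
  have hcon' : ∀ j : ℕ, 0 < j → δ₁ ≤ H^[j] b - H^[j] a := by
    intro j hj
    have := hcon (lrep l j) (lrep_ne_nil hl hj)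
    rw [wl_lrep hG, wl_lrep hG] at this
    linarith [le_trans hδ₁le this]
  have hlt1 : ∀ j : ℕ, 0 < j → H^[j] b - H^[j] a < 1 := by
    intro j hj
    by_contra hge
    push_neg at hge
    have huniv : Sj j = univ := by
      apply eq_univ_of_univ_subset
      rw [← AddCircle.coe_image_Icc_eq (1:ℝ) (H^[j] a)]
      apply image_mono
      exact Icc_subset_Icc (le_refl _) (by linarith)
    obtain ⟨q, hq⟩ := hSne (j+1)
    exact Set.disjoint_left.1 (hdisj j (j+1) (by omega)) (huniv ▸ mem_univ q) hq
  have hvol : ∀ j : ℕ, 0 < j → ENNReal.ofReal δ₁ ≤ volume (Sj j) := by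
    intro j hj
    set t : ℝ := H^[j] a with htdef
    have mp := AddCircle.measurePreserving_mk 1 t
    have h1 : volume (Sj j) = volume.restrict (Ioc t (t+1)) (pr ⁻¹' (Sj j)) :=
      (mp.measure_preimage (hmeas j).nullMeasurableSet).symm
    have h2 : volume.restrict (Ioc t (t+1)) (pr ⁻¹' (Sj j))
        = volume ((pr ⁻¹' (Sj j)) ∩ Ioc t (t+1)) :=
      Measure.restrict_apply (pr_continuous.measurable (hmeas j))
    have h3 : Ioc t (H^[j] b) ⊆ (pr ⁻¹' (Sj j)) ∩ Ioc t (t+1) := by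
      intro x hx
      constructor
      · exact ⟨x, ⟨hx.1.le, hx.2⟩, rfl⟩
      · exact ⟨hx.1, le_trans hx.2 (by linarith [hlt1 j hj])⟩
    calc ENNReal.ofReal δ₁ ≤ ENNReal.ofReal (H^[j] b - t) :=
          ENNReal.ofReal_le_ofReal (hcon' j hj)
    _ = volume (Ioc t (H^[j] b)) := (Real.volume_Ioc).symm
    _ ≤ volume ((pr ⁻¹' (Sj j)) ∩ Ioc t (t+1)) := measure_mono h3
    _ = volume (Sj j) := by rw [← h2, ← h1]
  -- summing over many disjoint sets exceeds the total measure
  obtain ⟨N, hN⟩ := exists_nat_gt (1/δ₁)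
  have hNδ : 1 < (N:ℝ) * δ₁ := by
    rw [div_lt_iff₀ hδ₁pos] at hN
    exact hN
  set s : Finset ℕ := Finset.Icc 1 N with hsdef
  have hpd : (↑s : Set ℕ).PairwiseDisjoint Sj := fun i _ j _ hij => hdisj i j hij
  have hsum : ∑ j ∈ s, volume (Sj j) = volume (⋃ j ∈ s, Sj j) :=
    (measure_biUnion_finset hpd (fun j _ => hmeas j)).symm
  have hle1 : volume (⋃ j ∈ s, Sj j) ≤ ENNReal.ofReal 1 := by
    rw [← AddCircle.measure_univ (T := (1:ℝ))]
    exact measure_mono (subset_univ _)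
  have hcard : s.card = N := by rw [hsdef, Nat.card_Icc]; omega
  have hlower : (N : ℝ≥0∞) * ENNReal.ofReal δ₁ ≤ ∑ j ∈ s, volume (Sj j) := by
    calc (N : ℝ≥0∞) * ENNReal.ofReal δ₁ = s.card • ENNReal.ofReal δ₁ := by
          rw [hcard, nsmul_eq_mul]
    _ ≤ ∑ j ∈ s, volume (Sj j) := Finset.card_nsmul_le_sum s _ _
          (fun j hj => hvol j (Finset.mem_Icc.1 hj).1)
  have : (N : ℝ≥0∞) * ENNReal.ofReal δ₁ ≤ ENNReal.ofReal 1 :=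
    le_trans hlower (hsum.trans_le hle1)
  rw [show (N : ℝ≥0∞) = ENNReal.ofReal (N:ℝ) by simp [ENNReal.ofReal_natCast],
    ← ENNReal.ofReal_mul (by positivity : (0:ℝ) ≤ (N:ℝ))] at this
  have := (ENNReal.ofReal_le_ofReal_iff (by norm_num)).1 this
  linarith

/-- if the semiconjugacy `F` is discontinuous somewhere, the word has a periodic point. -/
lemma jump_periodic (hG : GoodLifts f G) {l : List (Fin k)}
    {F : CircleDeg1Lift} {τ : ℝ} (hsc : ∀ x, F (wl G l x) = F x + τ)
    (hdis : ¬ ∀ x, ContinuousAt (⇑F) x) :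
    ∃ (n : ℕ) (x : ℝ) (p : ℤ), 0 < n ∧ (wl G l)^[n] x = x + p := by
  set H : ℝ → ℝ := wl G l with hHdef
  have hHs : StrictMono H := wl_strictMono hG l
  have hHc : Continuous H := wl_continuous hG l
  have Fm : Monotone ⇑F := F.monotone
  push_neg at hdis
  obtain ⟨x₁, hx₁⟩ := hdis
  set jp : ℝ → ℝ := fun x => rightLim ⇑F x - leftLim ⇑F x with hjpdef
  have hc₀ : 0 < jp x₁ := by
    have hle : leftLim ⇑F x₁ ≤ rightLim ⇑F x₁ := Fm.leftLim_le_rightLim (le_refl x₁)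
    have hne : leftLim ⇑F x₁ ≠ rightLim ⇑F x₁ := by
      intro h
      exact hx₁ (Fm.continuousAt_iff_leftLim_eq_rightLim.2 h)
    rw [hjpdef]
    simp only []
    cases lt_or_eq_of_le hle with
    | inl h => linarith
    | inr h => exact absurd h hne
  set c₀ : ℝ := jp x₁ with hc₀def
  have hjH : ∀ x, jp (H x) = jp x := fun x =>
    jump_comp_eq Fm hHc hHs hsc x
  have hj1 : ∀ x, jp (x + 1) = jp x := fun x =>
    jump_comp_eq Fm (continuous_id.add continuous_const)
      (fun u v huv => by simpa using huv) (c := 1) (fun y => F.map_add_one y) x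
  have hjint : ∀ (x : ℝ) (m : ℤ), jp (x + m) = jp x := by
    intro x m
    have h := add_int_of_add_one (Ψ := fun y => jp y + y) (fun y => by
      rw [hj1 y]; ring) x m
    linarith
  set J : Set ℝ := {x | c₀ ≤ jp x} ∩ Ico (0:ℝ) 1 with hJdef
  have hJfin : J.Finite := by
    apply finite_of_separated (g := leftLim ⇑F) (c₀ := c₀) (lo := F (-1)) (hi := F 1) hc₀
    · intro x hx y hy hxy
      have h1 : rightLim ⇑F x ≤ leftLim ⇑F y := Fm.rightLim_le_leftLim hxy
      have h2 : c₀ ≤ jp x := hx.1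
      have h3 : rightLim ⇑F x = leftLim ⇑F x + jp x := by rw [hjpdef]; ring
      linarith
    · intro x hx
      exact Fm.le_leftLim (by linarith [hx.2.1] : (-1:ℝ) < x)
    · intro x hx
      exact Fm.leftLim_le (le_of_lt hx.2.2)
  have hfract : ∀ x : ℝ, c₀ ≤ jp x → Int.fract x ∈ J := by
    intro x hx
    refine ⟨?_, Int.fract_nonneg x, Int.fract_lt_one x⟩
    show c₀ ≤ jp (Int.fract x)
    have : Int.fract x = x + (-⌊x⌋ : ℤ) := by rw [Int.fract]; push_cast; ring
    rw [this, hjint]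
    exact hx
  have hfract_pr : ∀ x : ℝ, pr (Int.fract x) = pr x := by
    intro x
    have : x = Int.fract x + (⌊x⌋ : ℤ) := by rw [Int.fract]; push_cast; ring
    conv_rhs => rw [this]
    exact (pr_add_int _ _).symm
  set T : Set (AddCircle (1:ℝ)) := pr '' J with hTdef
  have hTfin : T.Finite := hJfin.image pr
  -- T is mapped into itself by the circle map of the word
  have hmapsto : ∀ q ∈ T, listComp (fun i => ⇑(f i)) l q ∈ T := by
    rintro q ⟨x, hx, rfl⟩
    rw [wl_comm hG]
    have hHx : c₀ ≤ jp (H x) := by rw [hjH]; exact hx.1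
    exact ⟨Int.fract (H x), hfract (H x) hHx, hfract_pr (H x)⟩
  have hq₀ : pr (Int.fract x₁) ∈ T := ⟨Int.fract x₁, hfract x₁ (le_refl _), rfl⟩
  set r : ℕ → AddCircle (1:ℝ) := fun j => (listComp (fun i => ⇑(f i)) l)^[j] (pr (Int.fract x₁))
    with hrdef
  have hrT : ∀ j, r j ∈ T := by
    intro j
    induction j with
    | zero => exact hq₀
    | succ j ih =>
        rw [hrdef]
        simp only [Function.iterate_succ_apply']
        exact hmapsto _ ih
  have : Finite T := hTfin.to_subtype
  obtain ⟨i, j, hij, hEq⟩ := Finite.exists_ne_map_eq_of_infinite (fun j : ℕ => (⟨r j, hrT j⟩ : T))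
  have hEq' : r i = r j := by simpa [Subtype.ext_iff] using hEq
  -- derive a periodic point
  have keyper : ∀ i j : ℕ, i < j → r i = r j →
      ∃ (n : ℕ) (x : ℝ) (p : ℤ), 0 < n ∧ H^[n] x = x + p := by
    intro i j hlt hreq
    set m : ℕ := j - i with hmdef
    have hm : 0 < m := by omega
    obtain ⟨xr, hxr⟩ := pr_surjective (r i)
    have h1 : r (m + i) = (listComp (fun i => ⇑(f i)) l)^[m] (r i) :=
      Function.iterate_add_apply _ m i _
    have h2 : m + i = j := by omega
    have hiter : (listComp (fun i => ⇑(f i)) l)^[m] (r i) = r i := by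
      rw [← h1, h2, ← hreq]
    rw [← hxr, iter_comm hG] at hiter
    obtain ⟨pm, hpm⟩ := pr_eq_iff.1 hiter.symm
    exact ⟨m, xr, pm, hm, by rw [← hpm]⟩
  rcases lt_or_gt_of_ne hij with h | h
  · exact keyper i j h hEq'
  · exact keyper j i h hEq'.symm

/-- Case 2 : no lifted periodic point. -/
lemma casetwo (hG : GoodLifts f G) {l : List (Fin k)} (hl : l ≠ [])
    (hnoper : ¬ ∃ (n : ℕ) (x : ℝ) (p : ℤ), 0 < n ∧ (wl G l)^[n] x = x + p) :
    (∃ (φ : (AddCircle (1:ℝ)) ≃ₜ (AddCircle (1:ℝ))) (d : AddCircle (1:ℝ)),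
        ∀ x, φ (listComp (fun i => ⇑(f i)) l (φ.symm x)) = d + x) ∨
    (∃ a b : ℝ, a < b ∧ ∀ δ > (0:ℝ), ∃ w : List (Fin k), w ≠ [] ∧ wl G w b - wl G w a < δ) := by
  set HD : CircleDeg1Lift := wlD hG l with hHDdef
  have hHDc : Continuous ⇑HD := wl_continuous hG l
  set τ : ℝ := HD.translationNumber with hτdef
  have htau : ∀ r : ℚ, τ ≠ (r:ℝ) := by
    intro r hr
    have hden : 0 < r.den := r.pos
    rw [Rat.cast_def] at hr
    obtain ⟨x, hx⟩ := (HD.translationNumber_eq_rat_iff hHDc hden).1 hr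
    apply hnoper
    refine ⟨r.den, x, r.num, hden, ?_⟩
    rw [show ((HD ^ r.den) x) = (⇑HD)^[r.den] x from congrFun (CircleDeg1Lift.coe_pow HD r.den) x]
      at hx
    exact hx
  have hHu := wlD_isUnit hG l
  have hHuc : (↑hHu.unit : CircleDeg1Lift) = HD := hHu.unit_spec
  have hequ : (↑hHu.unit : CircleDeg1Lift).translationNumber =
      (↑(CircleDeg1Lift.translate (Multiplicative.ofAdd τ)) : CircleDeg1Lift).translationNumber := by
    rw [hHuc, CircleDeg1Lift.translationNumber_translate]
  obtain ⟨F, hF⟩ := CircleDeg1Lift.units_semiconj_of_translationNumber_eq hequ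
  have hsc : ∀ x, F (wl G l x) = F x + τ := by
    intro x
    have h1 := hF x
    rw [hHuc] at h1
    have h2 : (↑(CircleDeg1Lift.translate (Multiplicative.ofAdd τ)) : CircleDeg1Lift) (F x)
        = τ + F x := CircleDeg1Lift.translate_apply τ (F x)
    rw [h2] at h1
    rw [show wl G l x = HD x from rfl, h1]
    ring
  by_cases hcont : ∀ x, ContinuousAt (⇑F) x
  · by_cases hstrict : StrictMono (⇑F)
    · left
      exact conj_rotation_of_semiconj (fun x => wl_comm hG l x) hstrict
        (continuous_iff_continuousAt.2 hcont) F.map_add_one (fun x => hsc x)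
    · right
      have hflat : ∃ a b : ℝ, a < b ∧ F b ≤ F a := by
        by_contra hcon
        push_neg at hcon
        exact hstrict (fun a b hab => hcon a b hab)
      obtain ⟨a, b, hab, hba⟩ := hflat
      exact ⟨a, b, hab, flats_contraction hG hl hsc htau hab hba⟩
  · exact absurd (jump_periodic hG hsc hcont) hnoper

/-- combination: if the word is not conjugate to a rotation, some arc is contracted. -/
lemma contraction_of_notrot (hG : GoodLifts f G) {l : List (Fin k)} (hl : l ≠ [])
    (hnr : ¬ ∃ (φ : (AddCircle (1:ℝ)) ≃ₜ (AddCircle (1:ℝ))) (d : AddCircle (1:ℝ)),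
        ∀ x, φ (listComp (fun i => ⇑(f i)) l (φ.symm x)) = d + x) :
    ∃ a b : ℝ, a < b ∧ ∀ δ > (0:ℝ), ∃ w : List (Fin k), w ≠ [] ∧ wl G w b - wl G w a < δ := by
  by_cases hper : ∃ (n : ℕ) (x : ℝ) (p : ℤ), 0 < n ∧ (wl G l)^[n] x = x + p
  · obtain ⟨n, x₀, p, hn, hx⟩ := hper
    rcases caseone hG hl hn hx with h | h
    exacts [absurd h hnr, h]
  · rcases casetwo hG hl hper with h | h
    exacts [absurd h hnr, h]

end casetwo

end IFSAux

theorem dense_periodic_points_of_forward_backward_minimal_IFS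
    {k : ℕ} (f : Fin k → (AddCircle (1 : ℝ) ≃ₜ AddCircle (1 : ℝ)))
    -- each generator is orientation-preserving: it has a strictly monotone degree-one lift
    (hor : ∀ i : Fin k, ∃ G : ℝ → ℝ, StrictMono G ∧ Continuous G ∧
      (∀ x : ℝ, G (x + 1) = G x + 1) ∧
      ∀ x : ℝ, f i ((x : ℝ) : AddCircle (1 : ℝ)) = ((G x : ℝ) : AddCircle (1 : ℝ)))
    -- forward minimality
    (hfwd : ∀ x : AddCircle (1 : ℝ),
      Dense {y | ∃ l : List (Fin k), l ≠ [] ∧ y = listComp (fun i => ⇑(f i)) l x})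
    -- backward minimality
    (hbwd : ∀ x : AddCircle (1 : ℝ),
      Dense {y | ∃ l : List (Fin k), l ≠ [] ∧ y = listComp (fun i => ⇑(f i).symm) l x})
    -- some element of the semigroup is not conjugate to a rotation
    (hnotrot : ∃ l : List (Fin k), l ≠ [] ∧
      ¬ ∃ (φ : AddCircle (1 : ℝ) ≃ₜ AddCircle (1 : ℝ)) (c : AddCircle (1 : ℝ)),
          ∀ x, φ (listComp (fun i => ⇑(f i)) l (φ.symm x)) = c + x) :
    Dense {q : AddCircle (1 : ℝ) |
      ∃ l : List (Fin k), l ≠ [] ∧ listComp (fun i => ⇑(f i)) l q = q} := by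
  choose G hG1 hG2 hG3 hG4 using hor
  have hG : IFSAux.GoodLifts f G := fun i => ⟨hG1 i, hG2 i, hG3 i, fun x => hG4 i x⟩
  obtain ⟨l, hl, hnr⟩ := hnotrot
  obtain ⟨a, b, hab, hcontr⟩ := IFSAux.contraction_of_notrot hG hl hnr
  exact IFSAux.dense_of_contraction hG hfwd hbwd hab hcontr
end
end
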